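/- arXiv:1909.10217 — 6 statements merged into one kernel-verified Lean document; each statement's English description precedes it below -/
import Mathlib

section
/- Let m ≥ 1 and let x : ℤ/mℤ → ℤ be a sequence of integers with total sum ∑_{i} x_i = −1. Then there exists exactly one index j ∈ ℤ/mℤ such that the cyclically shifted partial sums satisfy ∑_{s=0}^{t−1} x_{j+s} ≥ 0 for every t with 1 ≤ t ≤ m−1 (equivalently: the path of partial sums of the shift starting at j stays nonnegative before time m and reaches its value −1 for the first time at time m). -/
open Finset

private def cycS (m : ℕ) (x : ZMod m → ℤ) (n : ℕ) : ℤ :=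
  ∑ i ∈ Finset.range n, x (i : ZMod m)

private lemma cyc_univ (m : ℕ) [NeZero m] (f : ZMod m → ℤ) :
    ∑ i : ZMod m, f i = ∑ i ∈ range m, f (i : ZMod m) := by
  refine Finset.sum_nbij' (fun i => i.val) (fun n => (n : ZMod m)) ?_ ?_ ?_ ?_ ?_
  · intro a _; exact mem_range.mpr (ZMod.val_lt a)
  · intro n _; exact mem_univ _
  · intro a _; simp [ZMod.natCast_val]
  · intro n hn; exact ZMod.val_cast_of_lt (mem_range.mp hn)
  · intro a _; rw [ZMod.natCast_rightInverse a]

private lemma cyc_shift (m : ℕ) [NeZero m] (x : ZMod m → ℤ) (j : ZMod m) (t : ℕ) :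
    ∑ s ∈ range t, x (j + (s : ZMod m)) = cycS m x (j.val + t) - cycS m x j.val := by
  induction t with
  | zero => simp
  | succ t ih =>
    have hcast : ((j.val + t : ℕ) : ZMod m) = j + (t : ZMod m) := by
      push_cast
      rw [ZMod.natCast_rightInverse j]
    have hstep : cycS m x (j.val + (t + 1)) = cycS m x (j.val + t) + x (j + (t : ZMod m)) := by
      rw [show j.val + (t + 1) = (j.val + t) + 1 from rfl, cycS, sum_range_succ, hcast]; rfl
    rw [sum_range_succ, ih, hstep]; ring

private lemma cyc_period (m : ℕ) [NeZero m] (x : ZMod m → ℤ)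
    (hsum : ∑ i : ZMod m, x i = -1) (n : ℕ) :
    cycS m x (n + m) = cycS m x n - 1 := by
  have h1 : cycS m x (n + m) = cycS m x n + ∑ s ∈ range m, x ((n + s : ℕ) : ZMod m) := by
    rw [cycS, Finset.sum_range_add]; rfl
  have h2 : ∀ s : ℕ, ((n + s : ℕ) : ZMod m) = (n : ZMod m) + (s : ZMod m) := by
    intro s; push_cast; ring
  have h3 : ∑ s ∈ range m, x ((n : ZMod m) + (s : ZMod m)) = -1 := by
    rw [← cyc_univ m (fun i => x ((n : ZMod m) + i))]
    rw [← hsum]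
    exact Equiv.sum_comp (Equiv.addLeft (n : ZMod m)) x
  simp only [h2] at h1
  rw [h1, h3]; ring

/-- **Cyclic (Feller/Kemperman) lemma.** If `x : ZMod m → ℤ` has total sum `-1`,
then there is exactly one starting index `j` such that all the cyclically shifted
partial sums `∑_{s=0}^{t-1} x (j+s)` are nonnegative for `1 ≤ t ≤ m-1`. -/
theorem cyclic_lemma (m : ℕ) [NeZero m] (hm : 1 ≤ m) (x : ZMod m → ℤ)
    (hsum : ∑ i : ZMod m, x i = -1) :
    ∃! j : ZMod m, ∀ t : ℕ, 1 ≤ t → t ≤ m - 1 →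
      0 ≤ ∑ s ∈ Finset.range t, x (j + (s : ZMod m)) := by
  classical
  obtain ⟨b, hb, hbmin⟩ := Finset.exists_min_image (range m) (cycS m x) ⟨0, mem_range.mpr hm⟩
  have hQ : ∃ n, n < m ∧ ∀ k < m, cycS m x n ≤ cycS m x k :=
    ⟨b, mem_range.mp hb, fun k hk => hbmin k (mem_range.mpr hk)⟩
  set n₀ := Nat.find hQ with hn₀def
  obtain ⟨hn₀m, hn₀min⟩ := Nat.find_spec hQ
  have hstrict : ∀ i < n₀, cycS m x n₀ < cycS m x i := by
    intro i hi
    have hnot := Nat.find_min hQ hi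
    push_neg at hnot
    obtain ⟨k, hk, hki⟩ := hnot (lt_trans hi hn₀m)
    exact lt_of_le_of_lt (hn₀min k hk) hki
  have key : ∀ j : ZMod m,
      (∀ t : ℕ, 1 ≤ t → t ≤ m - 1 → 0 ≤ ∑ s ∈ Finset.range t, x (j + (s : ZMod m))) ↔
      (∀ t : ℕ, 1 ≤ t → t ≤ m - 1 → cycS m x j.val ≤ cycS m x (j.val + t)) := by
    intro j
    constructor
    · intro h t h1 h2; have h3 := h t h1 h2; rw [cyc_shift m x j t] at h3; omega
    · intro h t h1 h2; rw [cyc_shift m x j t]; have h3 := h t h1 h2; omega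
  have hgood : ∀ t : ℕ, 1 ≤ t → t ≤ m - 1 → cycS m x n₀ ≤ cycS m x (n₀ + t) := by
    intro t h1 h2
    by_cases hc : n₀ + t < m
    · exact hn₀min _ hc
    · have hi : n₀ + t - m < n₀ := by omega
      have heq := cyc_period m x hsum (n₀ + t - m)
      rw [show (n₀ + t - m) + m = n₀ + t from by omega] at heq
      have := hstrict _ hi
      omega
  have hval : ((n₀ : ZMod m)).val = n₀ := ZMod.val_cast_of_lt hn₀m
  refine ⟨(n₀ : ZMod m), ?_, ?_⟩
  · refine (key _).mpr ?_
    rw [hval]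
    exact hgood
  · intro k hk
    have hka := (key k).mp hk
    set a := k.val with ha
    have ham : a < m := ZMod.val_lt k
    have key2 : a = n₀ := by
      by_contra hne
      rcases Nat.lt_or_ge a n₀ with hlt | hge
      · have e1 := hka (n₀ - a) (by omega) (by omega)
        have e2 := hgood (a + m - n₀) (by omega) (by omega)
        rw [show a + (n₀ - a) = n₀ from by omega] at e1
        rw [show n₀ + (a + m - n₀) = a + m from by omega] at e2
        have hp := cyc_period m x hsum a
        omega
      · have hlt : n₀ < a := by omega
        have e1 := hgood (a - n₀) (by omega) (by omega)
        have e2 := hka (n₀ + m - a) (by omega) (by omega)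
        rw [show n₀ + (a - n₀) = a from by omega] at e1
        rw [show a + (n₀ + m - a) = n₀ + m from by omega] at e2
        have hp := cyc_period m x hsum n₀
        omega
    calc k = ((k.val : ℕ) : ZMod m) := (ZMod.natCast_rightInverse k).symm
      _ = (n₀ : ZMod m) := by rw [← ha, key2]
end

section
/- For every integer m ≥ 1 and every integer n ≥ 0, P( R_m = 0, D_m = n, and R_i ≥ 1 for all 0 ≤ i ≤ m−1 ) = (1/m) · P( R_m = 0 and D_m = n ). -/
open MeasureTheory ProbabilityTheory

namespace CyclicFP
open Finset


open Finset

noncomputable section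

def S (f : ℕ → ℤ) (i : ℕ) : ℤ := ∑ k ∈ Finset.range i, f k

def Good (m : ℕ) (f : ℕ → ℤ) (j : ℕ) : Prop :=
  ∀ i < m, 0 ≤ ∑ k ∈ Finset.range i, f ((k + j) % m)

lemma S_zero (f : ℕ → ℤ) : S f 0 = 0 := by simp [S]

lemma rot_sum (f : ℕ → ℤ) {m j i : ℕ} (hj : j < m) (him : i ≤ m) :
    ∑ k ∈ Finset.range i, f ((k + j) % m) =
      if j + i ≤ m then S f (j + i) - S f j
      else S f m - S f j + S f (i + j - m) := by
  split_ifs with h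
  · have h1 : ∀ k ∈ Finset.range i, f ((k + j) % m) = f (j + k) := by
      intro k hk
      rw [mem_range] at hk
      rw [Nat.mod_eq_of_lt (by omega), Nat.add_comm]
    rw [Finset.sum_congr rfl h1]
    have h2 : S f (j + i) - S f j = ∑ k ∈ Finset.Ico j (j + i), f k := by
      rw [S, S, Finset.sum_Ico_eq_sub _ (by omega)]
    rw [h2, Finset.sum_Ico_eq_sum_range]
    simp
  · have hmj : m - j ≤ i := by omega
    rw [Finset.range_eq_Ico, ← Finset.sum_Ico_consecutive _ (Nat.zero_le (m - j)) hmj]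
    have h1 : ∑ k ∈ Finset.Ico 0 (m - j), f ((k + j) % m) = S f m - S f j := by
      rw [show S f m - S f j = ∑ k ∈ Finset.Ico j m, f k by
        rw [S, S, Finset.sum_Ico_eq_sub _ (by omega)],
        Finset.sum_Ico_eq_sum_range, Finset.sum_Ico_eq_sum_range]
      apply Finset.sum_congr rfl
      intro k hk
      rw [mem_range] at hk
      rw [Nat.zero_add, Nat.mod_eq_of_lt (by omega), Nat.add_comm]
    have h2 : ∑ k ∈ Finset.Ico (m - j) i, f ((k + j) % m) = S f (i + j - m) := by
      rw [Finset.sum_Ico_eq_sum_range, S]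
      apply Finset.sum_congr (by congr 1; omega)
      intro k hk
      rw [mem_range] at hk
      have : m - j + k + j = m + k := by omega
      rw [this, Nat.add_mod_left, Nat.mod_eq_of_lt (by omega)]
    rw [h1, h2]

lemma good_zero_iff {m : ℕ} {f : ℕ → ℤ} :
    Good m f 0 ↔ ∀ t < m, 0 ≤ S f t := by
  have key : ∀ i < m, ∑ k ∈ Finset.range i, f ((k + 0) % m) = S f i := by
    intro i hi
    apply Finset.sum_congr rfl
    intro k hk
    rw [mem_range] at hk
    rw [Nat.add_zero, Nat.mod_eq_of_lt (by omega)]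
  exact ⟨fun h t ht => (key t ht) ▸ h t ht, fun h i hi => (key i hi) ▸ h i hi⟩

lemma good_pos_iff {m j : ℕ} {f : ℕ → ℤ} (hj0 : 0 < j) (hj : j < m) (hsum : S f m = -1) :
    Good m f j ↔ (∀ t, 0 < t → t < j → S f j < S f t) ∧
      (∀ t, j ≤ t → t ≤ m → S f j ≤ S f t) := by
  constructor
  · intro h
    constructor
    · intro t ht0 htj
      have hi : t + m - j < m := by omega
      have h2 := h (t + m - j) hi
      rw [rot_sum f hj (by omega), if_neg (by omega),
        show t + m - j + j - m = t by omega, hsum] at h2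
      omega
    · intro t hjt htm
      have h2 := h (t - j) (by omega)
      rw [rot_sum f hj (by omega), if_pos (by omega),
        show j + (t - j) = t by omega] at h2
      omega
  · rintro ⟨h1, h2⟩ i hi
    rw [rot_sum f hj (le_of_lt hi)]
    split_ifs with hcase
    · have := h2 (j + i) (by omega) hcase
      omega
    · have := h1 (i + j - m) (by omega) (by omega)
      rw [hsum]
      omega

lemma good_unique {m : ℕ} {f : ℕ → ℤ} (hsum : S f m = -1)
    {j j' : ℕ} (hj : j < m) (hj' : j' < m)
    (g : Good m f j) (g' : Good m f j') : j = j' := by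
  have key : ∀ a b, a < b → b < m → Good m f a → Good m f b → False := by
    intro a b hab hbm ga gb
    have hb0 : 0 < b := by omega
    obtain ⟨gb1, gb2⟩ := (good_pos_iff hb0 hbm hsum).1 gb
    rcases Nat.eq_zero_or_pos a with ha | ha
    · subst ha
      have h1 := (good_zero_iff).1 ga b hbm
      have h2 := gb2 m (by omega) le_rfl
      rw [hsum] at h2
      omega
    · obtain ⟨ga1, ga2⟩ := (good_pos_iff ha (by omega) hsum).1 ga
      have h1 := ga2 b (by omega) (by omega)
      have h2 := gb1 a ha hab
      omega
  rcases lt_trichotomy j j' with h | h | h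
  · exact absurd (key j j' h hj' g g') (fun x => x)
  · exact h
  · exact absurd (key j' j h hj g' g) (fun x => x)

lemma good_exists {m : ℕ} {f : ℕ → ℤ} (hm : 0 < m) (hsum : S f m = -1) :
    ∃ j < m, Good m f j := by
  classical
  obtain ⟨t0, ht0mem, ht0min⟩ := Finset.exists_min_image (Finset.range (m + 1))
    (S f) ⟨0, by simp⟩
  have ht0m : t0 ≤ m := by simp only [mem_range] at ht0mem; omega
  have ht0p : ∀ t ≤ m, S f t0 ≤ S f t := fun t ht => ht0min t (by simp only [mem_range]; omega)
  have hex : ∃ j, ∀ t ≤ m, S f j ≤ S f t := ⟨t0, ht0p⟩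
  set j₀ := Nat.find hex with hj₀def
  have hspec : ∀ t ≤ m, S f j₀ ≤ S f t := Nat.find_spec hex
  have hmin : ∀ t < j₀, S f j₀ < S f t := by
    intro t ht
    by_contra hcon
    push_neg at hcon
    exact absurd (Nat.find_min hex ht) (by
      push_neg
      intro t' ht'
      exact le_trans hcon (hspec t' ht'))
  have hj₀le : j₀ ≤ m := le_trans (Nat.find_min' hex ht0p) ht0m
  have hj₀pos : 0 < j₀ := by
    rcases Nat.eq_zero_or_pos j₀ with h | h
    · have := hspec m le_rfl
      rw [hsum, h, S_zero] at this
      omega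
    · exact h
  rcases eq_or_lt_of_le hj₀le with heq | hlt
  · refine ⟨0, hm, good_zero_iff.2 ?_⟩
    intro t ht
    have := hmin t (heq ▸ ht)
    rw [heq, hsum] at this
    omega
  · refine ⟨j₀, hlt, (good_pos_iff hj₀pos hlt hsum).2 ⟨?_, ?_⟩⟩
    · intro t ht0 htj
      exact hmin t htj
    · intro t hjt htm
      exact hspec t htm

end

open MeasureTheory Finset

open Fin.NatCast

variable {m : ℕ}

lemma measurableSet_all (E : Set (Fin m → ℤ)) : MeasurableSet E :=
  (Set.to_countable E).measurableSet

def extz (m : ℕ) (x : Fin m → ℤ) (k : ℕ) : ℤ := if h : k < m then x ⟨k, h⟩ else 0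

lemma extz_val (x : Fin m → ℤ) (i : Fin m) : extz m x i.val = x i := by
  simp [extz]

def rot (m : ℕ) [NeZero m] (j : ℕ) : (Fin m → ℤ) → (Fin m → ℤ) := fun x i => x (i + (j : Fin m))

lemma val_add_natCast [NeZero m] (i : Fin m) (j : ℕ) :
    ((i + (j : Fin m)) : Fin m).val = (i.val + j) % m := by
  rw [Fin.val_add, Fin.val_natCast]
  conv_lhs => rw [Nat.add_mod]
  conv_rhs => rw [Nat.add_mod]
  rw [Nat.mod_mod_of_dvd j dvd_rfl]

lemma extz_rot [NeZero m] (x : Fin m → ℤ) (j : ℕ) {k : ℕ} (hk : k < m) :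
    extz m (rot m j x) k = extz m x ((k + j) % m) := by
  have hlt : (k + j) % m < m := Nat.mod_lt _ (NeZero.pos m)
  have h1 : extz m (rot m j x) k = x (⟨k, hk⟩ + (j : Fin m)) := by simp [extz, hk, rot]
  have h2 : extz m x ((k + j) % m) = x ⟨(k + j) % m, hlt⟩ := by simp [extz, hlt]
  rw [h1, h2]
  congr 1
  exact Fin.ext (val_add_natCast ⟨k, hk⟩ j)

lemma sum_rot_eq [NeZero m] (x : Fin m → ℤ) (j : ℕ) :
    ∑ k ∈ Finset.range m, extz m (rot m j x) k = ∑ k ∈ Finset.range m, extz m x k := by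
  rw [← Fin.sum_univ_eq_sum_range (fun k => extz m (rot m j x) k) m,
    ← Fin.sum_univ_eq_sum_range (fun k => extz m x k) m]
  simp only [extz_val]
  exact Fintype.sum_equiv (Equiv.addRight ((j : Fin m))) _ _ (fun i => rfl)

lemma card_rot_eq [NeZero m] (x : Fin m → ℤ) (j : ℕ) :
    ((Finset.range m).filter (fun k => extz m (rot m j x) k = -1)).card
      = ((Finset.range m).filter (fun k => extz m x k = -1)).card := by
  classical
  rw [Finset.card_filter, Finset.card_filter,
    ← Fin.sum_univ_eq_sum_range (fun k => if extz m (rot m j x) k = -1 then 1 else 0) m,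
    ← Fin.sum_univ_eq_sum_range (fun k => if extz m x k = -1 then 1 else 0) m]
  simp only [extz_val]
  exact Fintype.sum_equiv (Equiv.addRight ((j : Fin m))) _ _ (fun i => rfl)

lemma rot_measurePreserving [NeZero m] (j : ℕ) (ν : Measure ℤ) [SigmaFinite ν] :
    MeasurePreserving (rot m j) (Measure.pi fun _ : Fin m => ν) (Measure.pi fun _ : Fin m => ν) := by
  have hmeas : Measurable (rot m j) := measurable_pi_lambda _ (fun i => measurable_pi_apply _)
  refine ⟨hmeas, ?_⟩
  refine (Measure.pi_eq fun s hs => ?_).symm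
  rw [Measure.map_apply hmeas (MeasurableSet.univ_pi hs)]
  have hpre : rot m j ⁻¹' Set.pi Set.univ s = Set.pi Set.univ (fun b => s (b - (j : Fin m))) := by
    ext x
    simp only [Set.mem_preimage, Set.mem_pi, Set.mem_univ, true_implies, rot]
    constructor
    · intro h b
      have := h (b - (j : Fin m))
      rwa [sub_add_cancel] at this
    · intro h i
      have := h (i + (j : Fin m))
      rwa [add_sub_cancel_right] at this
  rw [hpre, Measure.pi_pi]
  exact Fintype.prod_equiv (Equiv.subRight ((j : Fin m))) _ _ (fun i => rfl)


open MeasureTheory Finset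

variable {m : ℕ}

def goodSet (m n j : ℕ) : Set (Fin m → ℤ) :=
  {x | (∑ k ∈ Finset.range m, extz m x k = -1 ∧
        ((Finset.range m).filter (fun k => extz m x k = -1)).card = n) ∧
       ∀ i < m, 0 ≤ ∑ k ∈ Finset.range i, extz m x ((k + j) % m)}

def baseSet (m n : ℕ) : Set (Fin m → ℤ) :=
  {x | ∑ k ∈ Finset.range m, extz m x k = -1 ∧
       ((Finset.range m).filter (fun k => extz m x k = -1)).card = n}

lemma baseSet_eq_biUnion {n : ℕ} (hm : 0 < m) :
    baseSet m n = ⋃ j ∈ Finset.range m, goodSet m n j := by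
  ext x
  simp only [Set.mem_iUnion, mem_range, baseSet, goodSet, Set.mem_setOf_eq, exists_prop]
  constructor
  · intro hx
    obtain ⟨j, hj, hgood⟩ := good_exists hm (show S (extz m x) m = -1 from hx.1)
    exact ⟨j, hj, hx, hgood⟩
  · rintro ⟨j, hj, hx, _⟩
    exact hx

lemma goodSet_disjoint {n : ℕ} :
    (↑(Finset.range m) : Set ℕ).PairwiseDisjoint (goodSet m n) := by
  intro a ha b hb hab
  simp only [coe_range, Set.mem_Iio] at ha hb
  rw [Function.onFun, Set.disjoint_left]
  intro x hxa hxb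
  exact hab (good_unique (show S (extz m x) m = -1 from hxa.1.1) ha hb hxa.2 hxb.2)

lemma goodSet_preimage [NeZero m] {n : ℕ} (j : ℕ) :
    goodSet m n j = rot m j ⁻¹' goodSet m n 0 := by
  ext x
  simp only [goodSet, Set.mem_setOf_eq, Set.mem_preimage]
  rw [sum_rot_eq x j, card_rot_eq x j]
  have hps : ∀ i < m, ∑ k ∈ Finset.range i, extz m (rot m j x) ((k + 0) % m)
      = ∑ k ∈ Finset.range i, extz m x ((k + j) % m) := by
    intro i hi
    apply Finset.sum_congr rfl
    intro k hk
    rw [mem_range] at hk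
    rw [Nat.add_zero, Nat.mod_eq_of_lt (by omega), extz_rot x j (by omega)]
  constructor
  · rintro ⟨hb, h⟩
    exact ⟨hb, fun i hi => by rw [hps i hi]; exact h i hi⟩
  · rintro ⟨hb, h⟩
    exact ⟨hb, fun i hi => by rw [← hps i hi]; exact h i hi⟩


end CyclicFP

open CyclicFP Finset

/-- **Feller's cyclic lemma for first passage events.** For an i.i.d. walk
`R_k = 1 + ∑_{i<k} X_i` with `D_k = #{i < k : X_i = -1}`, the probability that the
walk hits `0` at time `m` while staying `≥ 1` before, with `n` down-steps of size one,
is `1/m` times the unconstrained probability. -/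
theorem cyclic_first_passage
    (Ω : Type*) [MeasurableSpace Ω] (P : Measure Ω) [IsProbabilityMeasure P]
    (μ : PMF ℤ) (X : ℕ → Ω → ℤ)
    (hX : ∀ i, Measurable (X i))
    (hiid : iIndepFun X P)
    (hlaw : ∀ i, Measure.map (X i) P = μ.toMeasure)
    (m n : ℕ) (hm : 1 ≤ m) :
    P {ω | 1 + ∑ i ∈ Finset.range m, X i ω = 0 ∧
           ((Finset.range m).filter (fun i => X i ω = -1)).card = n ∧
           ∀ i < m, 1 ≤ 1 + ∑ k ∈ Finset.range i, X k ω}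
    = (1 / (m : ENNReal)) *
      P {ω | 1 + ∑ i ∈ Finset.range m, X i ω = 0 ∧
             ((Finset.range m).filter (fun i => X i ω = -1)).card = n} := by
  classical
  haveI : NeZero m := ⟨by omega⟩
  set ν : Measure ℤ := μ.toMeasure with hν
  set Y : Ω → (Fin m → ℤ) := fun ω i => X i ω with hYdef
  have hYmeas : Measurable Y := measurable_pi_lambda _ (fun i => hX i)
  -- the law of Y is the product measure
  have hYlaw : P.map Y = Measure.pi (fun _ : Fin m => ν) := by
    refine (Measure.pi_eq fun s hs => ?_).symm
    rw [Measure.map_apply hYmeas (MeasurableSet.univ_pi hs)]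
    have hpre : Y ⁻¹' Set.pi Set.univ s
        = ⋂ k ∈ Finset.range m, X k ⁻¹' (fun k => if h : k < m then s ⟨k, h⟩ else Set.univ) k := by
      ext ω
      simp only [Set.mem_preimage, Set.mem_pi, Set.mem_univ, true_implies, Set.mem_iInter,
        mem_range]
      constructor
      · intro h k hk
        simp only [dif_pos hk, Set.mem_preimage]
        exact h ⟨k, hk⟩
      · intro h i
        have := h i.val i.isLt
        simpa only [dif_pos i.isLt, Set.mem_preimage, Fin.eta] using this
    rw [hpre, hiid.measure_inter_preimage_eq_mul (Finset.range m)
      (fun k _ => (Set.to_countable _).measurableSet)]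
    have heach : ∀ k ∈ Finset.range m,
        P (X k ⁻¹' (fun k => if h : k < m then s ⟨k, h⟩ else Set.univ) k)
          = ν ((fun k => if h : k < m then s ⟨k, h⟩ else Set.univ) k) := by
      intro k _
      rw [← hlaw k, Measure.map_apply (hX k) ((Set.to_countable _).measurableSet)]
    rw [Finset.prod_congr rfl heach,
      ← Fin.prod_univ_eq_prod_range
        (fun k => ν ((fun k => if h : k < m then s ⟨k, h⟩ else Set.univ) k)) m]
    exact Finset.prod_congr rfl (fun i _ => by simp)
  have hP : ∀ E : Set (Fin m → ℤ), P (Y ⁻¹' E) = Measure.pi (fun _ : Fin m => ν) E := by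
    intro E
    rw [← Measure.map_apply hYmeas (measurableSet_all E), hYlaw]
  -- identify the two events
  have e0 : ∀ ω, ∀ k ∈ Finset.range m, extz m (Y ω) k = X k ω := by
    intro ω k hk
    rw [mem_range] at hk
    simp [extz, hk, hYdef]
  have e1 : ∀ ω, ∑ k ∈ Finset.range m, extz m (Y ω) k = ∑ i ∈ Finset.range m, X i ω :=
    fun ω => Finset.sum_congr rfl (e0 ω)
  have e2 : ∀ ω, (Finset.range m).filter (fun k => extz m (Y ω) k = -1)
      = (Finset.range m).filter (fun i => X i ω = -1) :=
    fun ω => Finset.filter_congr (fun k hk => by rw [e0 ω k hk])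
  have e3 : ∀ ω, ∀ i < m, ∑ k ∈ Finset.range i, extz m (Y ω) ((k + 0) % m)
      = ∑ k ∈ Finset.range i, X k ω := by
    intro ω i hi
    apply Finset.sum_congr rfl
    intro k hk
    rw [mem_range] at hk
    rw [Nat.add_zero, Nat.mod_eq_of_lt (by omega)]
    exact e0 ω k (mem_range.2 (by omega))
  have hA : {ω | 1 + ∑ i ∈ Finset.range m, X i ω = 0 ∧
           ((Finset.range m).filter (fun i => X i ω = -1)).card = n ∧
           ∀ i < m, 1 ≤ 1 + ∑ k ∈ Finset.range i, X k ω} = Y ⁻¹' goodSet m n 0 := by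
    ext ω
    simp only [Set.mem_setOf_eq, Set.mem_preimage, goodSet]
    rw [e1 ω, e2 ω]
    constructor
    · rintro ⟨h1, h2, h3⟩
      refine ⟨⟨by omega, h2⟩, fun i hi => ?_⟩
      rw [e3 ω i hi]
      have := h3 i hi
      omega
    · rintro ⟨⟨h1, h2⟩, h3⟩
      refine ⟨by omega, h2, fun i hi => ?_⟩
      have := h3 i hi
      rw [e3 ω i hi] at this
      omega
  have hB : {ω | 1 + ∑ i ∈ Finset.range m, X i ω = 0 ∧
           ((Finset.range m).filter (fun i => X i ω = -1)).card = n} = Y ⁻¹' baseSet m n := by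
    ext ω
    simp only [Set.mem_setOf_eq, Set.mem_preimage, baseSet]
    rw [e1 ω, e2 ω]
    constructor
    · rintro ⟨h1, h2⟩
      exact ⟨by omega, h2⟩
    · rintro ⟨h1, h2⟩
      exact ⟨by omega, h2⟩
  rw [hA, hB, hP _, hP _]
  have hsum : Measure.pi (fun _ : Fin m => ν) (baseSet m n)
      = ∑ j ∈ Finset.range m, Measure.pi (fun _ : Fin m => ν) (goodSet m n j) := by
    rw [baseSet_eq_biUnion (show 0 < m by omega)]
    exact measure_biUnion_finset goodSet_disjoint (fun j _ => measurableSet_all _)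
  have hrot : ∀ j ∈ Finset.range m, Measure.pi (fun _ : Fin m => ν) (goodSet m n j)
      = Measure.pi (fun _ : Fin m => ν) (goodSet m n 0) := by
    intro j _
    rw [goodSet_preimage j]
    exact (rot_measurePreserving j ν).measure_preimage (measurableSet_all _).nullMeasurableSet
  rw [hsum, Finset.sum_congr rfl hrot, Finset.sum_const, Finset.card_range, nsmul_eq_mul,
    ← mul_assoc, one_div, ENNReal.inv_mul_cancel (by exact_mod_cast (by omega : m ≠ 0))
      (ENNReal.natCast_ne_top m), one_mul]
end

section
/- For every sufficiently small δ > 0 there exist constants c > 0 and c' > 0 such that for every integer n ≥ 1, | P(τ < ∞, R_τ = 0, D_τ = n) − ∑_{m ≥ n, |n/m − μ(−1)| ≤ δ} (1/m) · P(D_m = n, R_m = 0) | ≤ c' · exp(−c n). -/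
open MeasureTheory ProbabilityTheory Real

namespace FPAux

set_option linter.unusedSectionVars false
set_option maxHeartbeats 1000000


def psum (x : ℕ → ℤ) (k : ℕ) : ℤ := ∑ i ∈ Finset.range k, x i

def good (x : ℕ → ℤ) (m j : ℕ) : Prop :=
  ∀ k, 1 ≤ k → k < m → 0 ≤ ∑ i ∈ Finset.range k, x ((j + i) % m)

lemma psum_add (x : ℕ → ℤ) (a b : ℕ) :
    psum x (a + b) = psum x a + ∑ i ∈ Finset.range b, x (a + i) :=
  Finset.sum_range_add (fun i => x i) a b

lemma shift_sum_le (x : ℕ → ℤ) (m j k : ℕ) (hjk : j + k ≤ m) :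
    ∑ i ∈ Finset.range k, x ((j + i) % m) = psum x (j + k) - psum x j := by
  have h1 : ∀ i ∈ Finset.range k, x ((j + i) % m) = x (j + i) := by
    intro i hi
    rw [Nat.mod_eq_of_lt]
    simp only [Finset.mem_range] at hi; omega
  rw [Finset.sum_congr rfl h1, psum_add]; ring

lemma shift_sum_gt (x : ℕ → ℤ) (m j k : ℕ) (hj : j < m) (hk : k ≤ m) (h : m < j + k) :
    ∑ i ∈ Finset.range k, x ((j + i) % m) =
      psum x m - psum x j + psum x (j + k - m) := by
  have hsplit : k = (m - j) + (j + k - m) := by omega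
  conv_lhs => rw [hsplit, Finset.sum_range_add]
  have h1 : ∀ i ∈ Finset.range (m - j), x ((j + i) % m) = x (j + i) := by
    intro i hi; rw [Nat.mod_eq_of_lt]; simp only [Finset.mem_range] at hi; omega
  have h2 : ∀ i ∈ Finset.range (j + k - m), x ((j + (m - j + i)) % m) = x i := by
    intro i hi; simp only [Finset.mem_range] at hi
    have e : j + (m - j + i) = m + i := by omega
    rw [e, Nat.add_mod_left, Nat.mod_eq_of_lt]; omega
  rw [Finset.sum_congr rfl h1, Finset.sum_congr rfl h2]
  have h3 : psum x m = psum x j + ∑ i ∈ Finset.range (m - j), x (j + i) := by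
    have e : m = j + (m - j) := by omega
    conv_lhs => rw [e, psum_add]
  have h4 : (Finset.range (j + k - m)).sum x = psum x (j + k - m) := rfl
  rw [h4]; omega


/-- The cycle lemma: if the total displacement over a period is `-1`, exactly one cyclic
shift is a good first-passage path. -/
theorem cycle_lemma (x : ℕ → ℤ) (m : ℕ) (hm : 1 ≤ m) (hsum : psum x m = -1) :
    ∃! j, j < m ∧ good x m j := by
  classical
  have hex : ∃ i, 1 ≤ i ∧ i ≤ m ∧ ∀ l, 1 ≤ l → l ≤ m → psum x i ≤ psum x l := by
    obtain ⟨i, hi, hmin⟩ := Finset.exists_min_image (Finset.Icc 1 m) (psum x)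
      ⟨m, Finset.mem_Icc.mpr ⟨hm, le_rfl⟩⟩
    simp only [Finset.mem_Icc] at hi
    exact ⟨i, hi.1, hi.2, fun l h1 h2 => hmin l (Finset.mem_Icc.mpr ⟨h1, h2⟩)⟩
  obtain ⟨J, ⟨hJ1, hJm, hJmin⟩, hJleast⟩ :
      ∃ J, (1 ≤ J ∧ J ≤ m ∧ ∀ l, 1 ≤ l → l ≤ m → psum x J ≤ psum x l) ∧
        ∀ i, i < J → ¬(1 ≤ i ∧ i ≤ m ∧ ∀ l, 1 ≤ l → l ≤ m → psum x i ≤ psum x l) :=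
    ⟨Nat.find hex, Nat.find_spec hex, fun i h => Nat.find_min hex h⟩
  have hstrict : ∀ i, 1 ≤ i → i < J → psum x J + 1 ≤ psum x i := by
    intro i h1 h2
    have hni := hJleast i h2
    push_neg at hni
    obtain ⟨l, hl1, hl2, hl3⟩ := hni h1 (le_trans (le_of_lt h2) hJm)
    have := hJmin l hl1 hl2
    omega
  refine ⟨J % m, ⟨Nat.mod_lt _ hm, ?_⟩, ?_⟩
  · -- good (J % m)
    intro k hk1 hkm
    by_cases hJeq : J = m
    · have hz : J % m = 0 := by rw [hJeq, Nat.mod_self]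
      rw [hz, shift_sum_le x m 0 k (by omega)]
      simp only [zero_add]
      have h0 : psum x 0 = 0 := by simp [psum]
      rw [h0, sub_zero]
      have := hstrict k hk1 (by omega)
      rw [hJeq, hsum] at this
      omega
    · have hJlt : J < m := lt_of_le_of_ne hJm hJeq
      rw [Nat.mod_eq_of_lt hJlt]
      by_cases hc : J + k ≤ m
      · rw [shift_sum_le x m J k hc]
        have := hJmin (J + k) (by omega) hc
        omega
      · rw [shift_sum_gt x m J k hJlt (le_of_lt hkm) (by omega)]
        have := hstrict (J + k - m) (by omega) (by omega)
        rw [hsum]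
        omega
  · -- uniqueness
    rintro j ⟨hjm, hgood⟩
    by_cases hj0 : j = 0
    · subst hj0
      have hnonneg : ∀ i, 1 ≤ i → i < m → 0 ≤ psum x i := by
        intro i h1 h2
        have hg := hgood i h1 h2
        rw [shift_sum_le x m 0 i (by omega)] at hg
        simpa [psum] using hg
      have hJm' : J = m := by
        by_contra hne
        have hJlt : J < m := lt_of_le_of_ne hJm hne
        have h0 := hnonneg J hJ1 hJlt
        have h1 := hJmin m hm le_rfl
        rw [hsum] at h1
        omega
      rw [hJm', Nat.mod_self]
    · have hj1 : 1 ≤ j := by omega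
      have hup : ∀ i, j < i → i ≤ m → psum x j ≤ psum x i := by
        intro i hi1 hi2
        have hg := hgood (i - j) (by omega) (by omega)
        rw [shift_sum_le x m j (i - j) (by omega)] at hg
        have e : j + (i - j) = i := by omega
        rw [e] at hg; omega
      have hlow : ∀ i, 1 ≤ i → i < j → psum x j + 1 ≤ psum x i := by
        intro i h1 h2
        have hg := hgood (m - j + i) (by omega) (by omega)
        rw [shift_sum_gt x m j (m - j + i) hjm (by omega) (by omega)] at hg
        have e : j + (m - j + i) - m = i := by omega
        rw [e, hsum] at hg
        omega
      have hargmin : ∀ l, 1 ≤ l → l ≤ m → psum x j ≤ psum x l := by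
        intro l h1 h2
        rcases lt_trichotomy l j with h | h | h
        · have := hlow l h1 h; omega
        · rw [h]
        · exact hup l h h2
      have hJle : J ≤ j := by
        by_contra hlt
        exact hJleast j (by omega) ⟨hj1, le_of_lt hjm, hargmin⟩
      have hJj : J = j := by
        rcases eq_or_lt_of_le hJle with h | h
        · exact h
        · exfalso
          have h1 := hlow J hJ1 h
          have h2 := hJmin j hj1 (le_of_lt hjm)
          omega
      rw [hJj, Nat.mod_eq_of_lt hjm]





lemma log_one_add_gt (x : ℝ) (hx : 0 < x) : x / (1 + x) < Real.log (1 + x) := by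
  have h1 : (0:ℝ) < 1 + x := by linarith
  have h2 : (1 + x)⁻¹ ≠ 1 := by
    intro h
    have : (1 + x) = 1 := by
      field_simp at h
      linarith
    linarith
  have := Real.log_lt_sub_one_of_pos (inv_pos.mpr h1) h2
  rw [Real.log_inv] at this
  have e : (1 + x)⁻¹ - 1 = -(x / (1 + x)) := by field_simp; ring
  rw [e] at this
  linarith

lemma neg_log_one_sub_lt (x : ℝ) (hx : 0 < x) (hx1 : x < 1) :
    -Real.log (1 - x) < x / (1 - x) := by
  have h1 : (0:ℝ) < 1 - x := by linarith
  have h2 : (1 - x)⁻¹ ≠ 1 := by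
    intro h
    have : (1 - x) = 1 := by
      field_simp at h
      linarith
    linarith
  have := Real.log_lt_sub_one_of_pos (inv_pos.mpr h1) h2
  rw [Real.log_inv] at this
  have e : (1 - x)⁻¹ - 1 = x / (1 - x) := by field_simp; ring
  rw [e] at this
  linarith

lemma nat_le_exp_div (a : ℝ) (ha : 0 < a) (n : ℕ) : (n : ℝ) ≤ exp (a * n) / a := by
  rw [le_div_iff₀ ha]
  have h := Real.add_one_le_exp (a * n)
  nlinarith [mul_nonneg ha.le (Nat.cast_nonneg n)]

lemma tail_geom (δ A : ℝ) (hδ : 0 < δ) :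
    ∑' m : ℕ, (if A < (m : ℝ) then Real.exp (-δ * m) else 0)
      ≤ Real.exp (-δ * A) / (1 - Real.exp (-δ)) := by
  classical
  have hr0 : (0:ℝ) ≤ exp (-δ) := (exp_pos _).le
  have hr1 : exp (-δ) < 1 := by
    rw [Real.exp_lt_one_iff]; linarith
  set M₀ := Nat.ceil A with hM₀
  have hAM : A ≤ (M₀ : ℝ) := Nat.le_ceil A
  set g : ℕ → ℝ := fun m => if M₀ ≤ m then Real.exp (-δ * m) else 0 with hg
  have hfg : ∀ m : ℕ, (if A < (m : ℝ) then Real.exp (-δ * m) else 0) ≤ g m := by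
    intro m
    by_cases h : A < (m : ℝ)
    · have : M₀ ≤ m := by
        rw [hM₀]
        exact Nat.ceil_le.mpr h.le
      simp [hg, h, this]
    · simp only [h, if_false, hg]
      split <;> positivity
  have hgsum : Summable g := by
    refine Summable.of_nonneg_of_le (fun m => ?_) (fun m => ?_)
      (summable_geometric_of_lt_one hr0 hr1)
    · simp only [hg]; split <;> positivity
    · simp only [hg]
      split
      · rw [← Real.exp_nat_mul]
        apply le_of_eq
        congr 1
        ring
      · positivity
  have hfsum : Summable (fun m : ℕ => if A < (m : ℝ) then Real.exp (-δ * m) else 0) := by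
    refine Summable.of_nonneg_of_le (fun m => ?_) hfg hgsum
    split <;> positivity
  refine le_trans (Summable.tsum_le_tsum hfg hfsum hgsum) ?_
  -- compute tsum g via shift
  have hinj : Function.Injective (fun k : ℕ => k + M₀) :=
    fun a b h => Nat.add_right_cancel h
  have hzero : Function.support g ⊆ Set.range (fun k : ℕ => k + M₀) := by
    intro b hb
    by_contra hc
    have hlt : b < M₀ := by
      by_contra h
      exact hc ⟨b - M₀, Nat.sub_add_cancel (Nat.le_of_not_lt h)⟩
    exact hb (by simp [hg, Nat.not_le.mpr hlt])
  have hshift := hinj.tsum_eq (f := g) hzero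
  rw [← hshift]
  have hcomp : ∀ k : ℕ, g (k + M₀) = Real.exp (-δ * M₀) * (Real.exp (-δ))^k := by
    intro k
    simp only [hg, le_add_iff_nonneg_left, Nat.zero_le, if_true]
    rw [← Real.exp_nat_mul, ← Real.exp_add]
    congr 1
    push_cast
    ring
  calc (∑' k : ℕ, g (k + M₀)) = ∑' k : ℕ, Real.exp (-δ * M₀) * (Real.exp (-δ))^k :=
        tsum_congr hcomp
    _ = Real.exp (-δ * M₀) * (1 - Real.exp (-δ))⁻¹ := by
        rw [tsum_mul_left, tsum_geometric_of_lt_one hr0 hr1]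
    _ ≤ Real.exp (-δ * A) * (1 - Real.exp (-δ))⁻¹ := by
        have hpos1 : (0:ℝ) < 1 - rexp (-δ) := by linarith
        apply mul_le_mul_of_nonneg_right _ (inv_nonneg.mpr hpos1.le)
        apply Real.exp_le_exp.mpr
        nlinarith
    _ = Real.exp (-δ * A) / (1 - Real.exp (-δ)) := by rw [div_eq_mul_inv]





set_option linter.unusedSectionVars false

variable {Ω : Type*} [MeasurableSpace Ω] {P : Measure Ω} [IsProbabilityMeasure P]
  {μ : PMF ℤ} {X : ℕ → Ω → ℤ}

/-- The product weight of a tuple. -/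
noncomputable def q (μ : PMF ℤ) {m : ℕ} (v : Fin m → ℤ) : ENNReal :=
  ∏ i : Fin m, μ.toMeasure {v i}

lemma atom_eq (m : ℕ) (v : Fin m → ℤ) :
    {ω | ∀ i : Fin m, X i ω = v i} =
      ⋂ i ∈ Finset.range m, X i ⁻¹' (if h : i < m then {v ⟨i, h⟩} else Set.univ) := by
  ext ω
  simp only [Set.mem_setOf_eq, Set.mem_iInter, Finset.mem_range, Set.mem_preimage]
  constructor
  · intro h i hi
    rw [dif_pos hi]
    exact h ⟨i, hi⟩
  · intro h i
    have := h i.1 i.2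
    rwa [dif_pos i.2] at this

lemma atom_measurable (hX : ∀ i, Measurable (X i)) (m : ℕ) (v : Fin m → ℤ) :
    MeasurableSet {ω | ∀ i : Fin m, X i ω = v i} := by
  rw [atom_eq]
  exact MeasurableSet.biInter (Finset.range m).countable_toSet fun i _ =>
    (hX i) (by by_cases h : i < m <;> simp [h])

lemma atom_meas (hX : ∀ i, Measurable (X i))
    (hiid : iIndepFun X P)
    (hlaw : ∀ i, Measure.map (X i) P = μ.toMeasure)
    (m : ℕ) (v : Fin m → ℤ) :
    P {ω | ∀ i : Fin m, X i ω = v i} = q μ v := by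
  rw [atom_eq]
  rw [hiid.measure_inter_preimage_eq_mul (Finset.range m)
    (sets := fun i => if h : i < m then {v ⟨i, h⟩} else Set.univ)
    (fun i hi => by by_cases h : i < m <;> simp [h])]
  rw [q, ← Fin.prod_univ_eq_prod_range (fun i => P (X i ⁻¹' (if h : i < m then {v ⟨i, h⟩} else Set.univ)))]
  refine Finset.prod_congr rfl fun i _ => ?_
  rw [dif_pos i.2]
  rw [← hlaw i.1, Measure.map_apply (hX i.1) (measurableSet_singleton _)]

lemma tuple_event_eq (m : ℕ) (S : Set (Fin m → ℤ)) :
    {ω | (fun i : Fin m => X i ω) ∈ S} =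
      ⋃ v : S, {ω | ∀ i : Fin m, X i ω = (v : Fin m → ℤ) i} := by
  ext ω
  simp only [Set.mem_setOf_eq, Set.mem_iUnion]
  constructor
  · intro h
    exact ⟨⟨_, h⟩, fun i => rfl⟩
  · rintro ⟨⟨v, hv⟩, h⟩
    have : (fun i : Fin m => X i ω) = v := funext h
    rwa [this]

lemma tuple_event_measurable (hX : ∀ i, Measurable (X i)) (m : ℕ) (S : Set (Fin m → ℤ)) :
    MeasurableSet {ω | (fun i : Fin m => X i ω) ∈ S} := by
  rw [tuple_event_eq]
  exact MeasurableSet.iUnion fun v => atom_measurable hX m v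

lemma meas_tuple (hX : ∀ i, Measurable (X i))
    (hiid : iIndepFun X P)
    (hlaw : ∀ i, Measure.map (X i) P = μ.toMeasure)
    (m : ℕ) (S : Set (Fin m → ℤ)) :
    P {ω | (fun i : Fin m => X i ω) ∈ S} = ∑' v : S, q μ (v : Fin m → ℤ) := by
  rw [tuple_event_eq]
  have hdisj : Pairwise (Function.onFun Disjoint
      (fun v : S => {ω | ∀ i : Fin m, X i ω = (v : Fin m → ℤ) i})) := by
    rintro ⟨v, hv⟩ ⟨w, hw⟩ hvw
    simp only [Function.onFun, Set.disjoint_left]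
    intro ω h1 h2
    exact hvw (by
      simp only [Subtype.mk.injEq]
      exact funext fun i => (h1 i).symm.trans (h2 i))
  rw [measure_iUnion hdisj (fun v => atom_measurable hX m v)]
  exact tsum_congr fun v => atom_meas hX hiid hlaw m v





lemma q_comp (μ : PMF ℤ) {m : ℕ} (v : Fin m → ℤ) (e : Fin m ≃ Fin m) :
    q μ (v ∘ e) = q μ v := by
  unfold q
  exact Equiv.prod_comp e (fun i => μ.toMeasure {v i})

lemma shift_meas (hX : ∀ i, Measurable (X i))
    (hiid : iIndepFun X P)
    (hlaw : ∀ i, Measure.map (X i) P = μ.toMeasure)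
    (m : ℕ) (e : Fin m ≃ Fin m) (S₀ : Set (Fin m → ℤ)) :
    P {ω | (fun i : Fin m => X i ω) ∈ (fun v => v ∘ e) ⁻¹' S₀} =
      P {ω | (fun i : Fin m => X i ω) ∈ S₀} := by
  rw [meas_tuple hX hiid hlaw, meas_tuple hX hiid hlaw]
  set S' := (fun v : Fin m → ℤ => v ∘ e) ⁻¹' S₀ with hS'
  have base : (Fin m → ℤ) ≃ (Fin m → ℤ) := Equiv.arrowCongr e.symm (Equiv.refl ℤ)
  let ε : S' ≃ S₀ :=
    { toFun := fun v => ⟨(v : Fin m → ℤ) ∘ e, v.2⟩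
      invFun := fun w => ⟨(w : Fin m → ℤ) ∘ e.symm, by
        have : ((w : Fin m → ℤ) ∘ e.symm) ∘ e = (w : Fin m → ℤ) := by
          funext i; simp
        simp only [hS', Set.mem_preimage, this]
        exact w.2⟩
      left_inv := fun v => by
        ext i; simp
      right_inv := fun w => by
        ext i; simp }
  rw [← ε.symm.tsum_eq (fun v : S' => q μ (v : Fin m → ℤ))]
  refine tsum_congr fun w => ?_
  show q μ ((w : Fin m → ℤ) ∘ e.symm) = q μ (w : Fin m → ℤ)
  exact q_comp μ _ e.symm





/-- Extension of a tuple by zero. -/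
def text {m : ℕ} (v : Fin m → ℤ) : ℕ → ℤ := fun i => if h : i < m then v ⟨i, h⟩ else 0

/-- Number of `-1` steps among the first `m`. -/
def dcard (x : ℕ → ℤ) (m : ℕ) : ℕ := ((Finset.range m).filter (fun i => x i = -1)).card

def TS (m n j : ℕ) : Set (Fin m → ℤ) :=
  {v | psum (text v) m = -1 ∧ dcard (text v) m = n ∧ good (text v) m j}

def BS (m n : ℕ) : Set (Fin m → ℤ) :=
  {v | psum (text v) m = -1 ∧ dcard (text v) m = n}

lemma psum_text {m : ℕ} (v : Fin m → ℤ) :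
    psum (text v) m = ∑ i : Fin m, v i := by
  rw [psum, ← Fin.sum_univ_eq_sum_range (fun i => text v i) m]
  exact Finset.sum_congr rfl fun i _ => by simp [text, i.2]

lemma dcard_text {m : ℕ} (v : Fin m → ℤ) :
    dcard (text v) m = (Finset.univ.filter (fun i : Fin m => v i = -1)).card := by
  rw [dcard, Finset.card_filter, Finset.card_filter,
    ← Fin.sum_univ_eq_sum_range (fun i => if text v i = -1 then 1 else 0) m]
  refine Finset.sum_congr rfl fun (i : Fin m) _ => by simp [text, i.2]

lemma TS_shift (m n j : ℕ) [NeZero m] (hj : j < m) :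
    TS m n j = (fun v : Fin m → ℤ =>
      v ∘ (Equiv.addLeft (⟨j, hj⟩ : Fin m))) ⁻¹' TS m n 0 := by
  have hm : 0 < m := Nat.pos_of_ne_zero (NeZero.ne m)
  ext v
  simp only [TS, Set.mem_preimage, Set.mem_setOf_eq]
  have h1 : psum (text (v ∘ (Equiv.addLeft (⟨j, hj⟩ : Fin m)))) m = psum (text v) m := by
    rw [psum_text, psum_text, ← Equiv.sum_comp (Equiv.addLeft (⟨j, hj⟩ : Fin m)) (fun i => v i)]
    rfl
  have h2 : dcard (text (v ∘ (Equiv.addLeft (⟨j, hj⟩ : Fin m)))) m = dcard (text v) m := by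
    rw [dcard_text, dcard_text, Finset.card_filter, Finset.card_filter,
      ← Equiv.sum_comp (Equiv.addLeft (⟨j, hj⟩ : Fin m))
        (fun i : Fin m => if v i = -1 then (1:ℕ) else 0)]
    rfl
  have h3 : good (text (v ∘ (Equiv.addLeft (⟨j, hj⟩ : Fin m)))) m 0 ↔ good (text v) m j := by
    unfold good
    refine forall₃_congr fun k hk1 hkm => ?_
    have hcong : ∀ i ∈ Finset.range k,
        text (v ∘ (Equiv.addLeft (⟨j, hj⟩ : Fin m))) ((0 + i) % m) = text v ((j + i) % m) := by
      intro i hi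
      simp only [Finset.mem_range] at hi
      have him : i < m := lt_trans hi hkm
      have e1 : (0 + i) % m = i := by rw [Nat.zero_add, Nat.mod_eq_of_lt him]
      rw [e1]
      have e2 : text (v ∘ (Equiv.addLeft (⟨j, hj⟩ : Fin m))) i
          = v ((⟨j, hj⟩ : Fin m) + ⟨i, him⟩) := by
        simp only [text, him, dif_pos]
        rfl
      have e4 : ((⟨j, hj⟩ : Fin m) + ⟨i, him⟩ : Fin m) = ⟨(j + i) % m, Nat.mod_lt _ hm⟩ := by
        apply Fin.ext
        simp [Fin.add_def]
      have e5 : text v ((j + i) % m) = v ⟨(j + i) % m, Nat.mod_lt _ hm⟩ := by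
        simp [text, Nat.mod_lt _ hm]
      rw [e2, e4, e5]
    rw [Finset.sum_congr rfl hcong]
  rw [h1, h2]
  tauto

lemma BS_partition (m n : ℕ) (hm : 1 ≤ m) :
    BS m n = ⋃ j ∈ Finset.range m, TS m n j := by
  ext v
  simp only [BS, TS, Set.mem_setOf_eq, Set.mem_iUnion, Finset.mem_range]
  constructor
  · rintro ⟨h1, h2⟩
    obtain ⟨j, ⟨hj, hgood⟩, -⟩ := cycle_lemma (text v) m hm h1
    exact ⟨j, hj, h1, h2, hgood⟩
  · rintro ⟨j, hj, h1, h2, h3⟩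
    exact ⟨h1, h2⟩

lemma TS_disjoint (m n : ℕ) (hm : 1 ≤ m) {j j' : ℕ} (hj : j < m) (hj' : j' < m)
    (hne : j ≠ j') : Disjoint (TS m n j) (TS m n j') := by
  rw [Set.disjoint_left]
  rintro v ⟨h1, h2, h3⟩ ⟨h1', h2', h3'⟩
  obtain ⟨j₀, hspec, huniq⟩ := cycle_lemma (text v) m hm h1
  exact hne ((huniq j ⟨hj, h3⟩).trans (huniq j' ⟨hj', h3'⟩).symm)



lemma cycle_meas (hX : ∀ i, Measurable (X i))
    (hiid : iIndepFun X P)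
    (hlaw : ∀ i, Measure.map (X i) P = μ.toMeasure)
    (m n : ℕ) (hm : 1 ≤ m) :
    P {ω | (fun i : Fin m => X i ω) ∈ BS m n} =
      m * P {ω | (fun i : Fin m => X i ω) ∈ TS m n 0} := by
  haveI : NeZero m := ⟨by omega⟩
  have hsplit : {ω | (fun i : Fin m => X i ω) ∈ BS m n} =
      ⋃ j ∈ Finset.range m, {ω | (fun i : Fin m => X i ω) ∈ TS m n j} := by
    rw [BS_partition m n hm]
    ext ω
    simp
  rw [hsplit, measure_biUnion_finset ?_ (fun j _ => tuple_event_measurable hX m _)]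
  · have : ∀ j ∈ Finset.range m, P {ω | (fun i : Fin m => X i ω) ∈ TS m n j} =
        P {ω | (fun i : Fin m => X i ω) ∈ TS m n 0} := by
      intro j hj
      simp only [Finset.mem_range] at hj
      rw [TS_shift m n j hj]
      exact shift_meas hX hiid hlaw m _ _
    rw [Finset.sum_congr rfl this, Finset.sum_const, Finset.card_range, nsmul_eq_mul]
  · intro j hj j' hj' hne
    simp only [Finset.coe_range, Set.mem_Iio] at hj hj'
    have hd := TS_disjoint m n hm hj hj' hne
    rw [Set.disjoint_left] at hd
    simp only [Function.onFun]
    rw [Set.disjoint_left]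
    intro ω h1 h2
    exact hd h1 h2

lemma psum_V (m : ℕ) (ω : Ω) :
    psum (text (fun i : Fin m => X i ω)) m = ∑ i ∈ Finset.range m, X i ω := by
  unfold psum
  refine Finset.sum_congr rfl fun i hi => ?_
  simp only [Finset.mem_range] at hi
  simp [text, hi]

lemma dcard_V (m : ℕ) (ω : Ω) :
    dcard (text (fun i : Fin m => X i ω)) m
      = ((Finset.range m).filter (fun i => X i ω = -1)).card := by
  unfold dcard
  congr 1
  apply Finset.filter_congr
  intro i hi
  simp only [Finset.mem_range] at hi
  simp [text, hi]

lemma good0_V (m : ℕ) (ω : Ω) :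
    good (text (fun i : Fin m => X i ω)) m 0 ↔
      ∀ i, 1 ≤ i → i < m → 1 ≤ 1 + ∑ k ∈ Finset.range i, X k ω := by
  unfold good
  refine forall₃_congr fun k hk1 hkm => ?_
  have hcong : ∀ i ∈ Finset.range k,
      text (fun i : Fin m => X i ω) ((0 + i) % m) = X i ω := by
    intro i hi
    simp only [Finset.mem_range] at hi
    have him : i < m := lt_trans hi hkm
    rw [Nat.zero_add, Nat.mod_eq_of_lt him]
    simp [text, him]
  rw [Finset.sum_congr rfl hcong]
  omega

lemma Bev_eq (m n : ℕ) :
    {ω | ((Finset.range m).filter (fun i => X i ω = -1)).card = n ∧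
        1 + ∑ i ∈ Finset.range m, X i ω = 0} =
      {ω | (fun i : Fin m => X i ω) ∈ BS m n} := by
  ext ω
  simp only [Set.mem_setOf_eq, BS, psum_V, dcard_V]
  constructor
  · rintro ⟨h1, h2⟩; exact ⟨by omega, h1⟩
  · rintro ⟨h1, h2⟩; exact ⟨h2, by omega⟩

lemma FPev_eq (m n : ℕ) :
    {ω | 1 + ∑ i ∈ Finset.range m, X i ω = 0 ∧
        (∀ i, 1 ≤ i → i < m → 1 ≤ 1 + ∑ k ∈ Finset.range i, X k ω) ∧
        ((Finset.range m).filter (fun i => X i ω = -1)).card = n} =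
      {ω | (fun i : Fin m => X i ω) ∈ TS m n 0} := by
  ext ω
  simp only [Set.mem_setOf_eq, TS, psum_V, dcard_V, good0_V]
  constructor
  · rintro ⟨h1, h2, h3⟩; exact ⟨by omega, h3, h2⟩
  · rintro ⟨h1, h2, h3⟩; exact ⟨by omega, h3, h2⟩



/-- Indicator of a `-1` step, as a real random variable. -/
noncomputable def Yb (X : ℕ → Ω → ℤ) (i : ℕ) : Ω → ℝ := fun ω => if X i ω = -1 then 1 else 0

lemma Yb_meas (hX : ∀ i, Measurable (X i)) (i : ℕ) : Measurable (Yb X i) := by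
  have : Yb X i = (fun z : ℤ => if z = -1 then (1:ℝ) else 0) ∘ X i := rfl
  rw [this]
  exact (Measurable.of_discrete).comp (hX i)

lemma Yb_iid (hX : ∀ i, Measurable (X i))
    (hiid : iIndepFun X P) :
    iIndepFun (Yb X) P :=
  hiid.comp (fun _ => fun z : ℤ => if z = -1 then (1:ℝ) else 0)
    (fun _ => Measurable.of_discrete)

lemma exp_mul_Yb (t : ℝ) (i : ℕ) (ω : Ω) :
    exp (t * Yb X i ω) =
      Set.indicator (X i ⁻¹' {-1}) (fun _ => exp t - 1) ω + 1 := by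
  by_cases h : X i ω = -1 <;> simp [Yb, h, Set.indicator, Set.mem_preimage]

lemma mgf_Yb (hX : ∀ i, Measurable (X i))
    (hlaw : ∀ i, Measure.map (X i) P = μ.toMeasure) (i : ℕ) (t : ℝ) :
    mgf (Yb X i) P t = 1 + (μ (-1)).toReal * (exp t - 1) := by
  unfold mgf
  have h1 : ∀ ω, exp (t * Yb X i ω) =
      Set.indicator (X i ⁻¹' {-1}) (fun _ => exp t - 1) ω + 1 := exp_mul_Yb t i
  rw [integral_congr_ae (Filter.Eventually.of_forall h1)]
  have hms : MeasurableSet (X i ⁻¹' {-1}) := (hX i) (measurableSet_singleton _)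
  rw [integral_add ((integrable_const (exp t - 1)).indicator hms) (integrable_const 1)]
  rw [integral_indicator_const _ hms, integral_const]
  have hP : P (X i ⁻¹' {-1}) = μ (-1) := by
    rw [← Measure.map_apply (hX i) (measurableSet_singleton _), hlaw i,
      PMF.toMeasure_apply_singleton _ _ (measurableSet_singleton _)]
  have hPr : P.real (X i ⁻¹' {-1}) = (μ (-1)).toReal := by rw [measureReal_def, hP]
  simp [hP, hPr]
  ring

lemma Yb_nonneg (i : ℕ) (ω : Ω) : 0 ≤ Yb X i ω := by
  unfold Yb; split <;> norm_num

lemma Yb_le_one (i : ℕ) (ω : Ω) : Yb X i ω ≤ 1 := by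
  unfold Yb; split <;> norm_num

lemma sum_Yb_int (hX : ∀ i, Measurable (X i)) (m : ℕ) (t : ℝ) :
    Integrable (fun ω => exp (t * ∑ i ∈ Finset.range m, Yb X i ω)) P := by
  have hmeas : Measurable fun ω => exp (t * ∑ i ∈ Finset.range m, Yb X i ω) :=
    ((Finset.range m).measurable_sum (fun i _ => Yb_meas hX i)).const_mul t |>.exp
  refine Integrable.mono' (integrable_const (exp (|t| * m))) hmeas.aestronglyMeasurable ?_
  refine Filter.Eventually.of_forall fun ω => ?_
  rw [Real.norm_eq_abs, abs_exp]
  apply exp_le_exp.mpr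
  have h1 : ∑ i ∈ Finset.range m, Yb X i ω ≤ m := by
    calc ∑ i ∈ Finset.range m, Yb X i ω ≤ ∑ i ∈ Finset.range m, 1 :=
          Finset.sum_le_sum fun i _ => Yb_le_one i ω
      _ = m := by simp
  have h2 : 0 ≤ ∑ i ∈ Finset.range m, Yb X i ω :=
    Finset.sum_nonneg fun i _ => Yb_nonneg i ω
  calc t * ∑ i ∈ Finset.range m, Yb X i ω ≤ |t * ∑ i ∈ Finset.range m, Yb X i ω| := le_abs_self _
    _ = |t| * |∑ i ∈ Finset.range m, Yb X i ω| := abs_mul _ _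
    _ ≤ |t| * m := by
        apply mul_le_mul_of_nonneg_left _ (abs_nonneg t)
        rw [abs_of_nonneg h2]; exact h1
  
lemma mgf_sum_Yb (hX : ∀ i, Measurable (X i))
    (hiid : iIndepFun X P)
    (hlaw : ∀ i, Measure.map (X i) P = μ.toMeasure) (m : ℕ) (t : ℝ) :
    mgf (∑ i ∈ Finset.range m, Yb X i) P t
      = (1 + (μ (-1)).toReal * (exp t - 1)) ^ m := by
  rw [(Yb_iid hX hiid).mgf_sum (fun i => Yb_meas hX i) (Finset.range m)]
  rw [Finset.prod_congr rfl (fun i _ => mgf_Yb hX hlaw i t)]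
  simp

lemma card_eq_sum_Yb (m : ℕ) (ω : Ω) :
    ((((Finset.range m).filter (fun i => X i ω = -1)).card : ℝ))
      = ∑ i ∈ Finset.range m, Yb X i ω := by
  rw [Finset.card_filter]
  push_cast
  refine Finset.sum_congr rfl fun i _ => ?_
  unfold Yb
  split <;> norm_num

/-- Chernoff upper-tail bound for the number of `-1` steps. -/
lemma chernoff_upper (hX : ∀ i, Measurable (X i))
    (hiid : iIndepFun X P)
    (hlaw : ∀ i, Measure.map (X i) P = μ.toMeasure) (m n : ℕ) (t : ℝ) (ht : 0 ≤ t) :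
    (P {ω | ((Finset.range m).filter (fun i => X i ω = -1)).card = n}).toReal ≤
      exp (-t * n) * (1 + (μ (-1)).toReal * (exp t - 1)) ^ m := by
  have hsub : {ω | ((Finset.range m).filter (fun i => X i ω = -1)).card = n} ⊆
      {ω | (n : ℝ) ≤ (∑ i ∈ Finset.range m, Yb X i) ω} := by
    intro ω hω
    simp only [Set.mem_setOf_eq] at hω ⊢
    rw [Finset.sum_apply]
    rw [← card_eq_sum_Yb, hω]
  calc (P {ω | ((Finset.range m).filter (fun i => X i ω = -1)).card = n}).toReal
      ≤ (P {ω | (n : ℝ) ≤ (∑ i ∈ Finset.range m, Yb X i) ω}).toReal :=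
        ENNReal.toReal_mono (measure_ne_top _ _) (measure_mono hsub)
    _ ≤ exp (-t * n) * mgf (∑ i ∈ Finset.range m, Yb X i) P t := by
        have hint : Integrable (fun ω => exp (t * (∑ i ∈ Finset.range m, Yb X i) ω)) P := by
          have := sum_Yb_int (P := P) hX m t
          simpa [Finset.sum_apply] using this
        exact measure_ge_le_exp_mul_mgf (μ := P)
          (X := ∑ i ∈ Finset.range m, Yb X i) (n : ℝ) ht hint
    _ = exp (-t * n) * (1 + (μ (-1)).toReal * (exp t - 1)) ^ m := by
        rw [mgf_sum_Yb hX hiid hlaw]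

/-- Chernoff lower-tail bound for the number of `-1` steps. -/
lemma chernoff_lower (hX : ∀ i, Measurable (X i))
    (hiid : iIndepFun X P)
    (hlaw : ∀ i, Measure.map (X i) P = μ.toMeasure) (m n : ℕ) (t : ℝ) (ht : t ≤ 0) :
    (P {ω | ((Finset.range m).filter (fun i => X i ω = -1)).card = n}).toReal ≤
      exp (-t * n) * (1 + (μ (-1)).toReal * (exp t - 1)) ^ m := by
  have hsub : {ω | ((Finset.range m).filter (fun i => X i ω = -1)).card = n} ⊆
      {ω | (∑ i ∈ Finset.range m, Yb X i) ω ≤ (n : ℝ)} := by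
    intro ω hω
    simp only [Set.mem_setOf_eq] at hω ⊢
    rw [Finset.sum_apply]
    rw [← card_eq_sum_Yb, hω]
  calc (P {ω | ((Finset.range m).filter (fun i => X i ω = -1)).card = n}).toReal
      ≤ (P {ω | (∑ i ∈ Finset.range m, Yb X i) ω ≤ (n : ℝ)}).toReal :=
        ENNReal.toReal_mono (measure_ne_top _ _) (measure_mono hsub)
    _ ≤ exp (-t * n) * mgf (∑ i ∈ Finset.range m, Yb X i) P t := by
        have hint : Integrable (fun ω => exp (t * (∑ i ∈ Finset.range m, Yb X i) ω)) P := by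
          have := sum_Yb_int (P := P) hX m t
          simpa [Finset.sum_apply] using this
        exact measure_le_le_exp_mul_mgf (μ := P)
          (X := ∑ i ∈ Finset.range m, Yb X i) (n : ℝ) ht hint
    _ = exp (-t * n) * (1 + (μ (-1)).toReal * (exp t - 1)) ^ m := by
        rw [mgf_sum_Yb hX hiid hlaw]



end FPAux

open MeasureTheory ProbabilityTheory

set_option maxHeartbeats 1000000 in
/-- The first-passage probability `P(τ < ∞, R_τ = 0, D_τ = n)` is approximated, up to an
exponentially small error, by the sum `∑_{m ≥ n, |n/m - μ(-1)| ≤ δ} (1/m) P(D_m = n, R_m = 0)`.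
Here `τ = inf{k ≥ 1 : R_k ≤ 0}`, and the event `{τ < ∞, R_τ = 0, D_τ = n}` is expressed as
the existence of `m ≥ 1` with `R_m = 0`, `R_i ≥ 1` for `1 ≤ i < m` and `D_m = n`. -/
theorem first_passage_approx_sum
    (Ω : Type*) [MeasurableSpace Ω] (P : Measure Ω) [IsProbabilityMeasure P]
    (μ : PMF ℤ) (X : ℕ → Ω → ℤ)
    (hX : ∀ i, Measurable (X i))
    (hiid : iIndepFun X P)
    (hlaw : ∀ i, Measure.map (X i) P = μ.toMeasure)
    (hsupp : ∀ k : ℤ, μ k ≠ 0 → k = -1 ∨ 2 ∣ k)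
    (hpos : 0 < μ (-1)) (hlt : μ (-1) < 1)
    (htail : ∃ c : ℝ, 0 < c ∧ ∃ k₀ : ℕ, 1 ≤ k₀ ∧ ∀ k : ℕ, k₀ ≤ k →
      ENNReal.ofReal (c * (k : ℝ) ^ (-(5/2) : ℝ)) ≤ μ (-(2 * (k : ℤ)))) :
    ∃ δ₀ : ℝ, 0 < δ₀ ∧ ∀ δ : ℝ, 0 < δ → δ ≤ δ₀ →
      ∃ c : ℝ, 0 < c ∧ ∃ c' : ℝ, 0 < c' ∧ ∀ n : ℕ, 1 ≤ n →
        |(P {ω | ∃ m : ℕ, 1 ≤ m ∧ 1 + ∑ i ∈ Finset.range m, X i ω = 0 ∧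
                  (∀ i, 1 ≤ i → i < m → 1 ≤ 1 + ∑ k ∈ Finset.range i, X k ω) ∧
                  ((Finset.range m).filter (fun i => X i ω = -1)).card = n}).toReal -
          ∑' m : ℕ, (if n ≤ m ∧ |(n : ℝ) / (m : ℝ) - (μ (-1)).toReal| ≤ δ then
              (1 / (m : ℝ)) *
                (P {ω | ((Finset.range m).filter (fun i => X i ω = -1)).card = n ∧
                        1 + ∑ i ∈ Finset.range m, X i ω = 0}).toReal
            else 0)| ≤ c' * Real.exp (-c * n) := by

  classical
  set p := (μ (-1)).toReal with hp
  have hμ1 : μ (-1) ≤ 1 := μ.coe_le_one (-1)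
  have hμtop : μ (-1) ≠ ⊤ := by
    intro h
    rw [h] at hμ1
    exact (by norm_num : ¬ ((⊤:ENNReal) ≤ 1)) hμ1
  have hppos : 0 < p := ENNReal.toReal_pos hpos.ne' hμtop
  have hple : p ≤ 1 := by
    have h := ENNReal.toReal_mono (by norm_num : (1:ENNReal) ≠ ⊤) hμ1
    simpa using h
  refine ⟨p/2, by positivity, fun δ hδ hδ2 => ?_⟩
  have hpδ : 0 < p - δ := by linarith
  have hδ1 : δ ≤ 1/2 := by linarith
  have hδp1 : δ/p < 1 := by rw [div_lt_one hppos]; linarith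
  have hδp0 : 0 < δ/p := by positivity
  have hbase1 : (0:ℝ) < 1 + δ/p := by linarith
  have hbase2 : (0:ℝ) < 1 - δ/p := by linarith
  set t₁ := Real.log (1 + δ/p) with ht₁
  have ht₁0 : 0 ≤ t₁ := Real.log_nonneg (by linarith)
  have hexpt₁ : Real.exp t₁ = 1 + δ/p := Real.exp_log hbase1
  set c₁ := t₁ - δ/(p+δ) with hc₁def
  have hc₁ : 0 < c₁ := by
    have h := FPAux.log_one_add_gt (δ/p) hδp0
    have e : (δ/p) / (1 + δ/p) = δ/(p+δ) := by
      rw [div_eq_div_iff (by positivity) (by positivity : (0:ℝ) < p + δ).ne']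
      field_simp
      try ring
    rw [e] at h
    rw [hc₁def]; linarith
  set t₂ := Real.log (1 - δ/p) with ht₂
  have ht₂0 : t₂ ≤ 0 := Real.log_nonpos (by linarith) (by linarith)
  have hexpt₂ : Real.exp t₂ = 1 - δ/p := Real.exp_log hbase2
  set L := -t₂ with hLdef
  set c₂ := δ/(p-δ) - L with hc₂def
  have hc₂ : 0 < c₂ := by
    have h := FPAux.neg_log_one_sub_lt (δ/p) hδp0 hδp1
    have e : (δ/p) / (1 - δ/p) = δ/(p-δ) := by
      rw [div_eq_div_iff (by positivity) hpδ.ne']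
      field_simp
      try ring
    rw [e] at h
    rw [hc₂def, hLdef, ht₂]; linarith
  have hexpδ : Real.exp (-δ) < 1 := by rw [Real.exp_lt_one_iff]; linarith
  have hden : (0:ℝ) < 1 - Real.exp (-δ) := by linarith
  refine ⟨min (c₁/2) c₂, lt_min (by positivity) hc₂,
    (1/p + 1) * (2/c₁) + 1/(1 - Real.exp (-δ)),
    add_pos (by positivity) (div_pos one_pos hden), fun n hn => ?_⟩
  have hn1 : (1:ℝ) ≤ (n:ℝ) := by exact_mod_cast hn
  -- events
  set Em : ℕ → Set Ω := fun m => {ω | 1 ≤ m ∧ 1 + ∑ i ∈ Finset.range m, X i ω = 0 ∧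
      (∀ i, 1 ≤ i → i < m → 1 ≤ 1 + ∑ k ∈ Finset.range i, X k ω) ∧
      ((Finset.range m).filter (fun i => X i ω = -1)).card = n} with hEmdef
  set Bev : ℕ → Set Ω := fun m =>
      {ω | ((Finset.range m).filter (fun i => X i ω = -1)).card = n ∧
        1 + ∑ i ∈ Finset.range m, X i ω = 0} with hBevdef
  have hbigset : {ω | ∃ m : ℕ, 1 ≤ m ∧ 1 + ∑ i ∈ Finset.range m, X i ω = 0 ∧
      (∀ i, 1 ≤ i → i < m → 1 ≤ 1 + ∑ k ∈ Finset.range i, X k ω) ∧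
      ((Finset.range m).filter (fun i => X i ω = -1)).card = n} = ⋃ m, Em m := by
    ext ω
    simp only [hEmdef, Set.mem_iUnion, Set.mem_setOf_eq]
  have hEmTS : ∀ m, 1 ≤ m → Em m = {ω | (fun i : Fin m => X i ω) ∈ FPAux.TS m n 0} := by
    intro m hm
    rw [← FPAux.FPev_eq]
    ext ω
    simp only [hEmdef, Set.mem_setOf_eq]
    tauto
  have hEmMeas : ∀ m, MeasurableSet (Em m) := by
    intro m
    rcases Nat.eq_zero_or_pos m with h0 | hm
    · have : Em m = ∅ := by
        ext ω
        simp only [hEmdef, Set.mem_setOf_eq, Set.mem_empty_iff_false, iff_false]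
        rintro ⟨h1, -⟩
        omega
      rw [this]; exact MeasurableSet.empty
    · rw [hEmTS m hm]
      exact FPAux.tuple_event_measurable hX m _
  have hdisjEm : Pairwise (Function.onFun Disjoint Em) := by
    have key : ∀ m m', m < m' → ∀ ω, ω ∈ Em m → ω ∈ Em m' → False := by
      intro m m' hlt ω h1 h2
      simp only [hEmdef, Set.mem_setOf_eq] at h1 h2
      obtain ⟨hm1, hsum1, -, -⟩ := h1
      obtain ⟨-, -, hpos2, -⟩ := h2
      have := hpos2 m hm1 hlt
      omega
    intro m m' hne
    rcases hne.lt_or_gt with h | h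
    · rw [Function.onFun, Set.disjoint_left]
      intro ω h1 h2; exact key _ _ h ω h1 h2
    · rw [Function.onFun, Set.disjoint_left]
      intro ω h1 h2; exact key _ _ h ω h2 h1
  have hPbig : P {ω | ∃ m : ℕ, 1 ≤ m ∧ 1 + ∑ i ∈ Finset.range m, X i ω = 0 ∧
      (∀ i, 1 ≤ i → i < m → 1 ≤ 1 + ∑ k ∈ Finset.range i, X k ω) ∧
      ((Finset.range m).filter (fun i => X i ω = -1)).card = n} = ∑' m, P (Em m) := by
    rw [hbigset]
    exact measure_iUnion hdisjEm hEmMeas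
  have hIdent : ∀ m, 1 ≤ m → P (Bev m) = m * P (Em m) := by
    intro m hm
    have h1 : Bev m = {ω | (fun i : Fin m => X i ω) ∈ FPAux.BS m n} := by
      rw [hBevdef]
      exact FPAux.Bev_eq m n
    rw [h1, hEmTS m hm]
    exact FPAux.cycle_meas hX hiid hlaw m n hm
  set a : ℕ → ℝ := fun m => (P (Em m)).toReal with hadef
  have hanneg : ∀ m, 0 ≤ a m := fun m => ENNReal.toReal_nonneg
  have hPbigne : (∑' m, P (Em m)) ≠ ⊤ := by
    rw [← hPbig]; exact measure_ne_top _ _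
  have hsumma : Summable a := ENNReal.summable_toReal hPbigne
  have hAeq : (P {ω | ∃ m : ℕ, 1 ≤ m ∧ 1 + ∑ i ∈ Finset.range m, X i ω = 0 ∧
      (∀ i, 1 ≤ i → i < m → 1 ≤ 1 + ∑ k ∈ Finset.range i, X k ω) ∧
      ((Finset.range m).filter (fun i => X i ω = -1)).card = n}).toReal = ∑' m, a m := by
    rw [hPbig, ENNReal.tsum_toReal_eq (fun m => measure_ne_top _ _)]
  set sB : ℕ → ℝ := fun m => if n ≤ m ∧ |(n:ℝ)/(m:ℝ) - p| ≤ δ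
      then (1/(m:ℝ)) * (P (Bev m)).toReal else 0 with hsBdef
  have hSeq : (∑' m : ℕ, (if n ≤ m ∧ |(n : ℝ) / (m : ℝ) - p| ≤ δ then
      (1 / (m : ℝ)) *
        (P {ω | ((Finset.range m).filter (fun i => X i ω = -1)).card = n ∧
                1 + ∑ i ∈ Finset.range m, X i ω = 0}).toReal
      else 0)) = ∑' m, sB m := by
    refine tsum_congr fun m => ?_
    simp only [hsBdef, hBevdef]
  rw [hAeq, hSeq]
  have hab : ∀ m, 1 ≤ m → a m = (1/(m:ℝ)) * (P (Bev m)).toReal := by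
    intro m hm
    have h2 : (P (Bev m)).toReal = (m:ℝ) * a m := by
      rw [hIdent m hm, ENNReal.toReal_mul]
      simp [hadef]
    rw [h2]
    have hm0 : (m:ℝ) ≠ 0 := Nat.cast_ne_zero.mpr (by omega)
    field_simp
  have hsBa : ∀ m, sB m = if n ≤ m ∧ |(n:ℝ)/(m:ℝ) - p| ≤ δ then a m else 0 := by
    intro m
    simp only [hsBdef]
    by_cases hcnd : n ≤ m ∧ |(n:ℝ)/(m:ℝ) - p| ≤ δ
    · rw [if_pos hcnd, if_pos hcnd, ← hab m (le_trans hn hcnd.1)]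
    · rw [if_neg hcnd, if_neg hcnd]
  have hsBsum : Summable sB := by
    refine Summable.of_nonneg_of_le (fun m => ?_) (fun m => ?_) hsumma
    · rw [hsBa]; split
      · exact hanneg m
      · exact le_refl 0
    · rw [hsBa]; split
      · exact le_rfl
      · exact hanneg m
  set hfun : ℕ → ℝ := fun m => if n ≤ m ∧ |(n:ℝ)/(m:ℝ) - p| ≤ δ then 0 else a m with hfdef
  have hdiff : (∑' m, a m) - (∑' m, sB m) = ∑' m, hfun m := by
    rw [← Summable.tsum_sub hsumma hsBsum]
    refine tsum_congr fun m => ?_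
    rw [hsBa]
    simp only [hfdef]
    by_cases hcnd : n ≤ m ∧ |(n:ℝ)/(m:ℝ) - p| ≤ δ
    · rw [if_pos hcnd, if_pos hcnd]; ring
    · rw [if_neg hcnd, if_neg hcnd]; ring
  have hfnonneg : ∀ m, 0 ≤ hfun m := by
    intro m; simp only [hfdef]; split
    · exact le_rfl
    · exact hanneg m
  have hfle : ∀ m, hfun m ≤ a m := by
    intro m; simp only [hfdef]; split
    · exact hanneg m
    · exact le_rfl
  have hfsum : Summable hfun := Summable.of_nonneg_of_le hfnonneg hfle hsumma
  rw [hdiff, abs_of_nonneg (tsum_nonneg hfnonneg)]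
  -- comparison functions
  set φ₁ : ℕ → ℝ := fun m => if (p+δ)*(m:ℝ) < (n:ℝ) then Real.exp (-c₁ * n) else 0 with hφ₁def
  set φ₂ : ℕ → ℝ := fun m => if (n:ℝ) < (p-δ)*(m:ℝ) then Real.exp (L*n - δ*m) else 0 with hφ₂def
  have hφ₁nonneg : ∀ m, 0 ≤ φ₁ m := by
    intro m; simp only [hφ₁def]; split <;> positivity
  have hφ₂nonneg : ∀ m, 0 ≤ φ₂ m := by
    intro m; simp only [hφ₂def]; split <;> positivity
  have hEmsub : ∀ m, Em m ⊆
      {ω | ((Finset.range m).filter (fun i => X i ω = -1)).card = n} := by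
    intro m ω hω
    simp only [hEmdef, Set.mem_setOf_eq] at hω ⊢
    exact hω.2.2.2
  have hacard : ∀ m, a m ≤
      (P {ω | ((Finset.range m).filter (fun i => X i ω = -1)).card = n}).toReal := by
    intro m
    exact ENNReal.toReal_mono (measure_ne_top _ _) (measure_mono (hEmsub m))
  -- pointwise bound
  have hkey : ∀ m, hfun m ≤ φ₁ m + φ₂ m := by
    intro m
    simp only [hfdef]
    by_cases hcnd : n ≤ m ∧ |(n:ℝ)/(m:ℝ) - p| ≤ δ
    · rw [if_pos hcnd]
      exact add_nonneg (hφ₁nonneg m) (hφ₂nonneg m)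
    · rw [if_neg hcnd]
      by_cases hmn : m < n
      · -- a m = 0 since the count cannot reach n
        have hempty : {ω : Ω | ((Finset.range m).filter (fun i => X i ω = -1)).card = n}
            = ∅ := by
          ext ω
          simp only [Set.mem_setOf_eq, Set.mem_empty_iff_false, iff_false]
          intro hcard
          have hle : ((Finset.range m).filter (fun i => X i ω = -1)).card ≤ m := by
            calc ((Finset.range m).filter (fun i => X i ω = -1)).card
                ≤ (Finset.range m).card := Finset.card_filter_le _ _
              _ = m := Finset.card_range m
          omega
        have h0 : a m ≤ 0 := by
          have := hacard m
          rw [hempty] at this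
          simpa using this
        have := hanneg m
        have ha0 : a m = 0 := le_antisymm h0 this
        rw [ha0]
        exact add_nonneg (hφ₁nonneg m) (hφ₂nonneg m)
      · push_neg at hmn
        have hmpos : 0 < m := by omega
        have hm0 : (0:ℝ) < (m:ℝ) := by exact_mod_cast hmpos
        have habs : δ < |(n:ℝ)/(m:ℝ) - p| := by
          by_contra hle
          push_neg at hle
          exact hcnd ⟨hmn, hle⟩
        rcases le_or_gt ((n:ℝ)/(m:ℝ)) p with hcase | hcase
        · -- lower-tail regime : n < (p-δ) m
          have h1 : δ < p - (n:ℝ)/(m:ℝ) := by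
            rwa [abs_of_nonpos (by linarith), neg_sub] at habs
          have h2 : (n:ℝ) < (p-δ)*(m:ℝ) := by
            have h3 : (n:ℝ)/(m:ℝ) < p - δ := by linarith
            calc (n:ℝ) = (n:ℝ)/(m:ℝ) * m := by field_simp
              _ < (p-δ) * m := by
                  exact mul_lt_mul_of_pos_right h3 hm0
          have hch := FPAux.chernoff_lower hX hiid hlaw m n t₂ ht₂0
          rw [← hp, hexpt₂] at hch
          have e1 : 1 + p * (1 - δ/p - 1) = 1 - δ := by
            have hpne : p ≠ 0 := hppos.ne'
            field_simp
            try ring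
          rw [e1] at hch
          have e2 : (1 - δ)^m ≤ Real.exp (-δ*m) := by
            have e3 : (1:ℝ) - δ ≤ Real.exp (-δ) := by
              have := Real.add_one_le_exp (-δ)
              linarith
            calc (1 - δ)^m ≤ (Real.exp (-δ))^m :=
                  pow_le_pow_left₀ (by linarith) e3 m
              _ = Real.exp (-δ*m) := by
                  rw [← Real.exp_nat_mul]
                  congr 1
                  ring
          have hchain : a m ≤ Real.exp (L*n - δ*m) := by
            calc a m ≤ (P {ω | ((Finset.range m).filter
                  (fun i => X i ω = -1)).card = n}).toReal := hacard m
              _ ≤ Real.exp (-t₂ * n) * (1-δ)^m := hch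
              _ ≤ Real.exp (-t₂ * n) * Real.exp (-δ*m) :=
                  mul_le_mul_of_nonneg_left e2 (Real.exp_nonneg _)
              _ = Real.exp (L*n - δ*m) := by
                  rw [← Real.exp_add]
                  congr 1
                  rw [hLdef]
                  ring
          have hφ₂val : φ₂ m = Real.exp (L*n - δ*m) := by
            simp only [hφ₂def]
            exact if_pos h2
          calc a m ≤ Real.exp (L*n - δ*m) := hchain
            _ = φ₂ m := hφ₂val.symm
            _ ≤ φ₁ m + φ₂ m := le_add_of_nonneg_left (hφ₁nonneg m)
        · -- upper-tail regime : (p+δ) m < n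
          have h1 : δ < (n:ℝ)/(m:ℝ) - p := by
            rwa [abs_of_nonneg (by linarith)] at habs
          have h2 : (p+δ)*(m:ℝ) < (n:ℝ) := by
            have h3 : p + δ < (n:ℝ)/(m:ℝ) := by linarith
            calc (p+δ)*(m:ℝ) < ((n:ℝ)/(m:ℝ)) * m := mul_lt_mul_of_pos_right h3 hm0
              _ = (n:ℝ) := by field_simp
          have hch := FPAux.chernoff_upper hX hiid hlaw m n t₁ ht₁0
          rw [← hp, hexpt₁] at hch
          have e1 : 1 + p * (1 + δ/p - 1) = 1 + δ := by
            have hpne : p ≠ 0 := hppos.ne'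
            field_simp
            try ring
          rw [e1] at hch
          have e2 : (1 + δ)^m ≤ Real.exp (δ*m) := by
            have e3 : (1:ℝ) + δ ≤ Real.exp δ := by
              have := Real.add_one_le_exp δ
              linarith
            calc (1 + δ)^m ≤ (Real.exp δ)^m := pow_le_pow_left₀ (by linarith) e3 m
              _ = Real.exp (δ*m) := by
                  rw [← Real.exp_nat_mul]
                  congr 1
                  ring
          have hmlt : (m:ℝ) < (n:ℝ)/(p+δ) := by
            rw [lt_div_iff₀ (by linarith : (0:ℝ) < p + δ)]
            linarith [h2]
          have hchain : a m ≤ Real.exp (-c₁ * n) := by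
            calc a m ≤ (P {ω | ((Finset.range m).filter
                  (fun i => X i ω = -1)).card = n}).toReal := hacard m
              _ ≤ Real.exp (-t₁ * n) * (1+δ)^m := hch
              _ ≤ Real.exp (-t₁ * n) * Real.exp (δ*m) :=
                  mul_le_mul_of_nonneg_left e2 (Real.exp_nonneg _)
              _ = Real.exp (-t₁*n + δ*m) := by rw [← Real.exp_add]
              _ ≤ Real.exp (-c₁ * n) := by
                  apply Real.exp_le_exp.mpr
                  have h4 : δ*(m:ℝ) ≤ δ * ((n:ℝ)/(p+δ)) :=
                    mul_le_mul_of_nonneg_left hmlt.le hδ.le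
                  have h5 : δ * ((n:ℝ)/(p+δ)) = (δ/(p+δ)) * n := by ring
                  rw [hc₁def]
                  rw [h5] at h4
                  linarith
          have hφ₁val : φ₁ m = Real.exp (-c₁ * n) := by
            simp only [hφ₁def]
            exact if_pos h2
          calc a m ≤ Real.exp (-c₁ * n) := hchain
            _ = φ₁ m := hφ₁val.symm
            _ ≤ φ₁ m + φ₂ m := le_add_of_nonneg_right (hφ₂nonneg m)
  -- summability of comparison functions
  set K := Nat.ceil ((n:ℝ)/(p+δ)) with hKdef
  have hφ₁zero : ∀ m ∉ Finset.range K, φ₁ m = 0 := by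
    intro m hm
    simp only [Finset.mem_range, not_lt] at hm
    simp only [hφ₁def]; rw [if_neg]
    push_neg
    have h1 : ((n:ℝ)/(p+δ)) ≤ (K:ℝ) := Nat.le_ceil _
    have h2 : (K:ℝ) ≤ (m:ℝ) := by exact_mod_cast hm
    have h3 : (n:ℝ)/(p+δ) ≤ (m:ℝ) := le_trans h1 h2
    rw [div_le_iff₀ (by linarith : (0:ℝ) < p + δ)] at h3
    linarith
  have hφ₁sum : Summable φ₁ := summable_of_ne_finset_zero hφ₁zero
  have hφ₂sum : Summable φ₂ := by
    refine Summable.of_nonneg_of_le hφ₂nonneg (fun m => ?_)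
      ((summable_geometric_of_lt_one (Real.exp_nonneg _) hexpδ).mul_left (Real.exp (L*n)))
    simp only [hφ₂def]
    split
    · rw [← Real.exp_nat_mul, ← Real.exp_add]
      apply Real.exp_le_exp.mpr
      apply le_of_eq
      ring
    · positivity
  -- sum the bounds
  have hsum1 : (∑' m, φ₁ m) ≤ (1/p + 1) * (2/c₁) * Real.exp (-(c₁/2) * n) := by
    rw [tsum_eq_sum hφ₁zero]
    have hterm : ∀ m ∈ Finset.range K, φ₁ m ≤ Real.exp (-c₁ * n) := by
      intro m _
      simp only [hφ₁def]
      split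
      · exact le_rfl
      · positivity
    calc (∑ m ∈ Finset.range K, φ₁ m) ≤ (Finset.range K).card • Real.exp (-c₁ * n) :=
          Finset.sum_le_card_nsmul _ _ _ hterm
      _ = (K:ℝ) * Real.exp (-c₁ * n) := by
          rw [Finset.card_range, nsmul_eq_mul]
      _ ≤ ((n:ℝ) * (1/p + 1)) * Real.exp (-c₁ * n) := by
          apply mul_le_mul_of_nonneg_right _ (Real.exp_nonneg _)
          have h1 : (K:ℝ) < (n:ℝ)/(p+δ) + 1 := Nat.ceil_lt_add_one (by positivity)
          have h2 : (n:ℝ)/(p+δ) ≤ (n:ℝ)/p := by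
            gcongr
            linarith
          have h3 : (n:ℝ)/p = (n:ℝ) * (1/p) := by ring
          nlinarith [hn1]
      _ ≤ ((Real.exp ((c₁/2) * n) / (c₁/2)) * (1/p + 1)) * Real.exp (-c₁ * n) := by
          apply mul_le_mul_of_nonneg_right _ (Real.exp_nonneg _)
          apply mul_le_mul_of_nonneg_right _ (by positivity)
          exact FPAux.nat_le_exp_div (c₁/2) (by positivity) n
      _ = (1/p + 1) * (2/c₁) * (Real.exp ((c₁/2) * n) * Real.exp (-c₁ * n)) := by
          field_simp
      _ = (1/p + 1) * (2/c₁) * Real.exp (-(c₁/2) * n) := by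
          rw [← Real.exp_add]
          congr 2
          ring
  have hsum2 : (∑' m, φ₂ m) ≤ (1/(1 - Real.exp (-δ))) * Real.exp (-c₂ * n) := by
    have hrw : ∀ m : ℕ, φ₂ m =
        Real.exp (L*n) * (if (n:ℝ)/(p-δ) < (m:ℝ) then Real.exp (-δ*m) else 0) := by
      intro m
      simp only [hφ₂def]
      by_cases hcnd : (n:ℝ) < (p-δ)*(m:ℝ)
      · have hcnd' : (n:ℝ)/(p-δ) < (m:ℝ) := by
          rw [div_lt_iff₀ hpδ]
          linarith
        rw [if_pos hcnd, if_pos hcnd', ← Real.exp_add]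
        congr 1
        ring
      · have hcnd' : ¬ ((n:ℝ)/(p-δ) < (m:ℝ)) := by
          rw [div_lt_iff₀ hpδ]
          intro h
          exact hcnd (by linarith)
        rw [if_neg hcnd, if_neg hcnd', mul_zero]
    calc (∑' m, φ₂ m)
        = ∑' m : ℕ, Real.exp (L*n) * (if (n:ℝ)/(p-δ) < (m:ℝ) then Real.exp (-δ*m) else 0) :=
          tsum_congr hrw
      _ = Real.exp (L*n) * ∑' m : ℕ, (if (n:ℝ)/(p-δ) < (m:ℝ) then Real.exp (-δ*m) else 0) :=
          tsum_mul_left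
      _ ≤ Real.exp (L*n) * (Real.exp (-δ * ((n:ℝ)/(p-δ))) / (1 - Real.exp (-δ))) := by
          apply mul_le_mul_of_nonneg_left _ (Real.exp_nonneg _)
          exact FPAux.tail_geom δ ((n:ℝ)/(p-δ)) hδ
      _ = (1/(1 - Real.exp (-δ))) * Real.exp (-c₂ * n) := by
          rw [div_eq_mul_inv, ← mul_assoc, ← Real.exp_add]
          rw [hc₂def]
          have e : L*(n:ℝ) + -δ * ((n:ℝ)/(p-δ)) = -(δ/(p-δ) - L) * n := by
            field_simp
            ring
          rw [e]
          ring
  -- final combination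
  have hmin1 : Real.exp (-(c₁/2) * n) ≤ Real.exp (-(min (c₁/2) c₂) * n) := by
    apply Real.exp_le_exp.mpr
    have : min (c₁/2) c₂ ≤ c₁/2 := min_le_left _ _
    nlinarith [hn1]
  have hmin2 : Real.exp (-c₂ * n) ≤ Real.exp (-(min (c₁/2) c₂) * n) := by
    apply Real.exp_le_exp.mpr
    have : min (c₁/2) c₂ ≤ c₂ := min_le_right _ _
    nlinarith [hn1]
  calc (∑' m, hfun m) ≤ ∑' m, (φ₁ m + φ₂ m) :=
        Summable.tsum_le_tsum hkey hfsum (hφ₁sum.add hφ₂sum)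
    _ = (∑' m, φ₁ m) + (∑' m, φ₂ m) := Summable.tsum_add hφ₁sum hφ₂sum
    _ ≤ (1/p + 1) * (2/c₁) * Real.exp (-(c₁/2) * n)
        + (1/(1 - Real.exp (-δ))) * Real.exp (-c₂ * n) := add_le_add hsum1 hsum2
    _ ≤ (1/p + 1) * (2/c₁) * Real.exp (-(min (c₁/2) c₂) * n)
        + (1/(1 - Real.exp (-δ))) * Real.exp (-(min (c₁/2) c₂) * n) := by
          apply add_le_add
          · exact mul_le_mul_of_nonneg_left hmin1 (by positivity)
          · exact mul_le_mul_of_nonneg_left hmin2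
              (le_of_lt (div_pos one_pos hden))
    _ = ((1/p + 1) * (2/c₁) + 1/(1 - Real.exp (-δ))) * Real.exp (-(min (c₁/2) c₂) * n) := by
          ring
end

section
/- Assume H^↑ is μ-harmonic on the positive integers, i.e. H^↑(p) = ∑_{k∈ℤ} μ(k) · H^↑(p+k) for every p ≥ 1. Then for every p ≥ 1 and every ℓ with 1 ≤ ℓ ≤ p, ∑_{k≥0} ν(k) · H^↑(p+2k) + (1/2) ∑_{k≥1} ν(−k) · H^↑(max(p−2k, p−ℓ)) + (1/2) ∑_{k≥1} ν(−k) · H^↑(max(p−2k, ℓ−1)) = H^↑(p). (In the paper this shows that the peeling transition probabilities of the half-planar Boltzmann map conditioned on an infinite core sum to one, regardless of which exposed edge is peeled.) -/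
open scoped BigOperators

noncomputable def Nneg (ν : PMF ℤ) : ℝ := ∑' k : ℕ, (ν (-(k : ℤ) - 1)).toReal

noncomputable def Hdown (ν : PMF ℤ) (ℓ : ℤ) : ℝ :=
  if 0 ≤ ℓ then
    (1 / Nneg ν) * ∑' i : ℕ, if (ℓ + 1) / 2 + 1 ≤ (i : ℤ) then (ν (-(i : ℤ))).toReal else 0
  else 0

noncomputable def Hup (ν : PMF ℤ) (ℓ : ℤ) : ℝ :=
  if 1 ≤ ℓ then ∑ j ∈ Finset.range ℓ.toNat, Hdown ν (j : ℤ) else 0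

noncomputable def muStep (ν : PMF ℤ) (k : ℤ) : ℝ :=
  if k = -1 then Nneg ν / 2
  else if 0 ≤ k ∧ 2 ∣ k then (ν (k / 2)).toReal
  else if k < 0 ∧ 2 ∣ k then (ν (k / 2)).toReal / 2
  else 0

section Aux

variable (ν : PMF ℤ)

lemma nu_summable_comp {f : ℕ → ℤ} (hf : Function.Injective f) :
    Summable fun k => (ν (f k)).toReal := by
  refine ENNReal.summable_toReal (ne_top_of_le_ne_top ?_ (ENNReal.tsum_comp_le_tsum_of_injective hf ν))
  simp [ν.tsum_coe]

lemma sumNeg : Summable fun k : ℕ => (ν (-(k : ℤ) - 1)).toReal :=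
  nu_summable_comp ν (fun a b h => by omega)

lemma sumNeg' : Summable fun i : ℕ => (ν (-(i : ℤ))).toReal :=
  nu_summable_comp ν (fun a b h => by omega)

lemma sumNegIf (P : ℕ → Prop) [DecidablePred P] :
    Summable fun i : ℕ => if P i then (ν (-(i : ℤ))).toReal else 0 := by
  refine Summable.of_nonneg_of_le (fun i => ?_) (fun i => ?_) (sumNeg' ν)
  · split <;> positivity
  · split <;> simp [ENNReal.toReal_nonneg]

lemma sumNegIf' (P : ℕ → Prop) [DecidablePred P] :
    Summable fun k : ℕ => if P k then (ν (-(k : ℤ) - 1)).toReal else 0 := by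
  refine Summable.of_nonneg_of_le (fun i => ?_) (fun i => ?_) (sumNeg ν)
  · split <;> positivity
  · split <;> simp [ENNReal.toReal_nonneg]

lemma Nneg_nonneg : 0 ≤ Nneg ν := tsum_nonneg (fun _ => ENNReal.toReal_nonneg)

lemma tail_tsum (t : ℤ) (ht : 1 ≤ t) :
    (∑' i : ℕ, if t ≤ (i : ℤ) then (ν (-(i : ℤ))).toReal else 0)
      = ∑' k : ℕ, if t ≤ (k : ℤ) + 1 then (ν (-(k : ℤ) - 1)).toReal else 0 := by
  rw [Summable.tsum_eq_zero_add (sumNegIf ν (fun i => t ≤ (i : ℤ)))]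
  rw [if_neg (by omega), zero_add]
  refine tsum_congr (fun k => ?_)
  have h1 : ((k + 1 : ℕ) : ℤ) = (k : ℤ) + 1 := by push_cast; ring
  rw [h1]
  congr 1
  ring_nf

lemma hdown_nonneg (hN : 0 < Nneg ν) (ℓ : ℤ) : 0 ≤ Hdown ν ℓ := by
  unfold Hdown
  split
  · refine mul_nonneg (by positivity) (tsum_nonneg (fun i => ?_))
    split <;> positivity
  · exact le_refl 0

lemma hdown_zero (hN : 0 < Nneg ν) : Hdown ν 0 = 1 := by
  unfold Hdown
  rw [if_pos le_rfl]
  have h1 : (∑' i : ℕ, if (0 + 1) / 2 + 1 ≤ (i : ℤ) then (ν (-(i : ℤ))).toReal else 0)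
      = Nneg ν := by
    have : ((0 : ℤ) + 1) / 2 + 1 = 1 := by decide
    rw [this, tail_tsum ν 1 le_rfl]
    unfold Nneg
    refine tsum_congr (fun k => ?_)
    rw [if_pos (by omega)]
  rw [h1]
  field_simp

lemma hup_nonneg (hN : 0 < Nneg ν) (ℓ : ℤ) : 0 ≤ Hup ν ℓ := by
  unfold Hup
  split
  · exact Finset.sum_nonneg (fun j _ => hdown_nonneg ν hN _)
  · exact le_refl 0

lemma hup_mono (hN : 0 < Nneg ν) {a b : ℤ} (h : a ≤ b) : Hup ν a ≤ Hup ν b := by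
  unfold Hup
  split
  · rw [if_pos (by omega)]
    refine Finset.sum_le_sum_of_subset_of_nonneg (Finset.range_subset_range.2 (by omega))
      (fun j _ _ => hdown_nonneg ν hN _)
  · split
    · exact Finset.sum_nonneg (fun j _ => hdown_nonneg ν hN _)
    · exact le_refl 0

lemma hup_max_zero (x : ℤ) : Hup ν (max x 0) = Hup ν x := by
  rcases le_or_gt x 0 with h | h
  · rw [max_eq_right h]
    unfold Hup
    rw [if_neg (by omega), if_neg (by omega)]
  · rw [max_eq_left h.le]

lemma hup_succ (m : ℤ) (hm : 1 ≤ m) : Hup ν m = Hup ν (m - 1) + Hdown ν (m - 1) := by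
  unfold Hup
  rcases eq_or_lt_of_le hm with h | h
  · rw [if_pos hm, if_neg (by omega), ← h]
    norm_num
  · rw [if_pos hm, if_pos (by omega)]
    have h1 : m.toNat = (m - 1).toNat + 1 := by omega
    rw [h1, Finset.sum_range_succ]
    congr 2 <;> omega

lemma hup_one_le (hN : 0 < Nneg ν) (p : ℤ) (hp : 1 ≤ p) : 1 ≤ Hup ν p := by
  have h1 : Hup ν 1 = 1 := by
    rw [hup_succ ν 1 le_rfl]
    norm_num [hdown_zero ν hN, Hup]
  calc (1 : ℝ) = Hup ν 1 := h1.symm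
    _ ≤ Hup ν p := hup_mono ν hN hp

end Aux

/-- The truncated-down sum `T p m`. -/
noncomputable def Tm (ν : PMF ℤ) (p m : ℤ) : ℝ :=
  ∑' k : ℕ, (ν (-(k : ℤ) - 1)).toReal * Hup ν (max (p - 2 * ((k : ℤ) + 1)) m)

section TmLemmas

variable (ν : PMF ℤ)

lemma sumTm (hN : 0 < Nneg ν) (p m : ℤ) (hm : m ≤ p) :
    Summable fun k : ℕ => (ν (-(k : ℤ) - 1)).toReal * Hup ν (max (p - 2 * ((k : ℤ) + 1)) m) := by
  refine Summable.of_nonneg_of_le (fun k => ?_) (fun k => ?_) ((sumNeg ν).mul_right (Hup ν p))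
  · exact mul_nonneg ENNReal.toReal_nonneg (hup_nonneg ν hN _)
  · exact mul_le_mul_of_nonneg_left (hup_mono ν hN (by omega)) ENNReal.toReal_nonneg

lemma Tm_zero : Tm ν p 0 = ∑' k : ℕ, (ν (-(k : ℤ) - 1)).toReal * Hup ν (p - 2 * ((k : ℤ) + 1)) := by
  unfold Tm
  exact tsum_congr (fun k => by rw [hup_max_zero])

lemma Tm_top (p : ℤ) : Tm ν p (p - 1) = Nneg ν * Hup ν (p - 1) := by
  unfold Tm
  have h : ∀ k : ℕ, max (p - 2 * ((k : ℤ) + 1)) (p - 1) = p - 1 := fun k => max_eq_right (by omega)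
  simp_rw [h]
  rw [tsum_mul_right]
  rfl

lemma Tm_step (hN : 0 < Nneg ν) (p m : ℤ) (h1 : 1 ≤ m) (h2 : m ≤ p - 1) :
    Tm ν p m = Tm ν p (m - 1) + Nneg ν * (Hdown ν (m - 1) * Hdown ν (p - m - 1)) := by
  have key : ∀ k : ℕ, (ν (-(k : ℤ) - 1)).toReal * Hup ν (max (p - 2 * ((k : ℤ) + 1)) m)
      = (ν (-(k : ℤ) - 1)).toReal * Hup ν (max (p - 2 * ((k : ℤ) + 1)) (m - 1))
        + Hdown ν (m - 1) *
          (if (p - m) / 2 + 1 ≤ (k : ℤ) + 1 then (ν (-(k : ℤ) - 1)).toReal else 0) := by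
    intro k
    by_cases hc : (p - m) / 2 + 1 ≤ (k : ℤ) + 1
    · have ha : p - 2 * ((k : ℤ) + 1) ≤ m - 1 := by omega
      rw [if_pos hc, max_eq_right (by omega), max_eq_right ha, hup_succ ν m h1]
      ring
    · have ha : m ≤ p - 2 * ((k : ℤ) + 1) := by omega
      rw [if_neg hc, max_eq_left ha, max_eq_left (by omega), mul_zero, add_zero]
  unfold Tm
  rw [tsum_congr key, Summable.tsum_add (sumTm ν hN p (m - 1) (by omega))
    ((sumNegIf' ν (fun k => (p - m) / 2 + 1 ≤ (k : ℤ) + 1)).mul_left (Hdown ν (m - 1))),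
    tsum_mul_left]
  have hB : (∑' k : ℕ, if (p - m) / 2 + 1 ≤ (k : ℤ) + 1 then (ν (-(k : ℤ) - 1)).toReal else 0)
      = Nneg ν * Hdown ν (p - m - 1) := by
    rw [← tail_tsum ν ((p - m) / 2 + 1) (by omega)]
    unfold Hdown
    rw [if_pos (by omega : (0 : ℤ) ≤ p - m - 1)]
    have he : (p - m - 1 + 1) / 2 + 1 = (p - m) / 2 + 1 := by omega
    rw [he, ← mul_assoc, mul_one_div, div_self hN.ne', one_mul]
  rw [hB]
  ring

lemma Tm_symm (hN : 0 < Nneg ν) (p ℓ : ℤ) (hp : 1 ≤ p) (h1 : 1 ≤ ℓ) (h2 : ℓ ≤ p) :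
    Tm ν p (p - ℓ) + Tm ν p (ℓ - 1) = Tm ν p (p - 1) + Tm ν p 0 := by
  suffices H : ∀ n : ℕ, (n : ℤ) + 1 ≤ p →
      Tm ν p (p - ((n : ℤ) + 1)) + Tm ν p (n : ℤ) = Tm ν p (p - 1) + Tm ν p 0 by
    have h := H (ℓ - 1).toNat (by omega)
    have e1 : (((ℓ - 1).toNat : ℤ)) = ℓ - 1 := by omega
    rw [e1] at h
    have e2 : p - (ℓ - 1 + 1) = p - ℓ := by ring
    rw [e2] at h
    exact h
  intro n
  induction n with
  | zero => intro _; norm_num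
  | succ n ih =>
    intro h
    have hcast : ((n + 1 : ℕ) : ℤ) = (n : ℤ) + 1 := by push_cast; ring
    rw [hcast]
    have ihh := ih (by omega)
    have e1 := Tm_step ν hN p ((n : ℤ) + 1) (by omega) (by omega)
    have e2 := Tm_step ν hN p (p - (n : ℤ) - 1) (by omega) (by omega)
    rw [show ((n : ℤ) + 1) - 1 = (n : ℤ) by ring] at e1
    rw [show p - ((n : ℤ) + 1) - 1 = p - (n : ℤ) - 2 by ring] at e1
    rw [show p - (n : ℤ) - 1 - 1 = p - (n : ℤ) - 2 by ring] at e2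
    rw [show p - (p - (n : ℤ) - 1) - 1 = (n : ℤ) by ring] at e2
    rw [show p - ((n : ℤ) + 1 + 1) = p - (n : ℤ) - 2 by ring]
    rw [show p - ((n : ℤ) + 1) = p - (n : ℤ) - 1 by ring] at ihh
    nlinarith [e1, e2, ihh]

end TmLemmas


lemma mu_zero (ν : PMF ℤ) (z : ℤ) (h1 : z ≠ -1) (h2 : ¬ (2 ∣ z)) : muStep ν z = 0 := by
  unfold muStep
  rw [if_neg h1, if_neg (fun h => h2 h.2), if_neg (fun h => h2 h.2)]

/-- The peeling transition probabilities of the half-planar Boltzmann map conditioned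
on an infinite core sum to one, regardless of which exposed edge `ℓ` is peeled:
assuming `H^↑` is `μ`-harmonic on the positive integers, for `1 ≤ ℓ ≤ p`,
`∑_{k≥0} ν(k) H^↑(p+2k) + ½∑_{k≥1} ν(-k) H^↑(max(p-2k, p-ℓ))
  + ½∑_{k≥1} ν(-k) H^↑(max(p-2k, ℓ-1)) = H^↑(p)`. -/
theorem peeling_transitions_sum_to_one
    (ν : PMF ℤ) (hN : 0 < Nneg ν)
    (hharm : ∀ p : ℤ, 1 ≤ p → Hup ν p = ∑' k : ℤ, muStep ν k * Hup ν (p + k)) :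
    ∀ p ℓ : ℤ, 1 ≤ p → 1 ≤ ℓ → ℓ ≤ p →
      (∑' k : ℕ, (ν (k : ℤ)).toReal * Hup ν (p + 2 * k))
        + (1 / 2) * (∑' k : ℕ,
            (ν (-(k : ℤ) - 1)).toReal * Hup ν (max (p - 2 * ((k : ℤ) + 1)) (p - ℓ)))
        + (1 / 2) * (∑' k : ℕ,
            (ν (-(k : ℤ) - 1)).toReal * Hup ν (max (p - 2 * ((k : ℤ) + 1)) (ℓ - 1)))
      = Hup ν p := by
  intro p ℓ hp hl1 hl2
  set f : ℤ → ℝ := fun k => muStep ν k * Hup ν (p + k) with hf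
  have hsum : Summable f := by
    by_contra hns
    have h0 := hharm p hp
    rw [tsum_eq_zero_of_not_summable hns] at h0
    have h1 := hup_one_le ν hN p hp
    linarith
  have hnat : Summable fun n : ℕ => f ((n : ℕ) : ℤ) := hsum.comp_injective Nat.cast_injective
  have hneg : Summable fun n : ℕ => f (-((n : ℤ) + 1)) :=
    hsum.comp_injective (fun (a b : ℕ) (h : -((a : ℤ) + 1) = -((b : ℤ) + 1)) => by omega)
  have hsplit : (∑' k : ℤ, f k) = (∑' n : ℕ, f ((n : ℕ) : ℤ)) + ∑' n : ℕ, f (-((n : ℤ) + 1)) :=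
    tsum_of_nat_of_neg_add_one hnat hneg
  -- nonnegative part
  have heA : Summable fun m : ℕ => f (((2 * m : ℕ) : ℤ)) :=
    hsum.comp_injective (fun (a b : ℕ) (h : ((2 * a : ℕ) : ℤ) = ((2 * b : ℕ) : ℤ)) => by omega)
  have hoA : Summable fun m : ℕ => f (((2 * m + 1 : ℕ) : ℤ)) :=
    hsum.comp_injective (fun (a b : ℕ) (h : ((2 * a + 1 : ℕ) : ℤ) = ((2 * b + 1 : ℕ) : ℤ)) => by omega)
  have h0A := tsum_even_add_odd (f := fun n : ℕ => f ((n : ℕ) : ℤ)) heA hoA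
  beta_reduce at h0A
  have hA1 : (∑' m : ℕ, f (((2 * m : ℕ) : ℤ)))
      = ∑' k : ℕ, (ν (k : ℤ)).toReal * Hup ν (p + 2 * k) := by
    refine tsum_congr (fun m => ?_)
    simp only [hf]
    have hmu : muStep ν ((2 * m : ℕ) : ℤ) = (ν (m : ℤ)).toReal := by
      unfold muStep
      have c1 : ¬ (((2 * m : ℕ) : ℤ) = -1) := by omega
      have c2 : (0 : ℤ) ≤ ((2 * m : ℕ) : ℤ) ∧ (2 : ℤ) ∣ ((2 * m : ℕ) : ℤ) := ⟨by omega, by omega⟩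
      rw [if_neg c1, if_pos c2]
      have c3 : ((2 * m : ℕ) : ℤ) / 2 = (m : ℤ) := by omega
      rw [c3]
    rw [hmu]
    have harg : p + ((2 * m : ℕ) : ℤ) = p + 2 * (m : ℤ) := by push_cast; ring
    rw [harg]
  have hA2 : (∑' m : ℕ, f (((2 * m + 1 : ℕ) : ℤ))) = 0 := by
    have h : ∀ m : ℕ, f (((2 * m + 1 : ℕ) : ℤ)) = 0 := by
      intro m
      simp only [hf]
      have c1 : (((2 * m + 1 : ℕ) : ℤ)) ≠ -1 := by omega
      have c2 : ¬ ((2 : ℤ) ∣ ((2 * m + 1 : ℕ) : ℤ)) := by omega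
      rw [mu_zero ν _ c1 c2, zero_mul]
    rw [tsum_congr h, tsum_zero]
  -- negative part
  have heB : Summable fun m : ℕ => f (-(((2 * m : ℕ) : ℤ) + 1)) :=
    hsum.comp_injective
      (fun (a b : ℕ) (h : -(((2 * a : ℕ) : ℤ) + 1) = -(((2 * b : ℕ) : ℤ) + 1)) => by omega)
  have hoB : Summable fun m : ℕ => f (-(((2 * m + 1 : ℕ) : ℤ) + 1)) :=
    hsum.comp_injective
      (fun (a b : ℕ) (h : -(((2 * a + 1 : ℕ) : ℤ) + 1) = -(((2 * b + 1 : ℕ) : ℤ) + 1)) => by omega)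
  have h0B := tsum_even_add_odd (f := fun n : ℕ => f (-((n : ℤ) + 1))) heB hoB
  beta_reduce at h0B
  have hB1 : (∑' m : ℕ, f (-(((2 * m : ℕ) : ℤ) + 1))) = Nneg ν / 2 * Hup ν (p - 1) := by
    have hz : ∀ m : ℕ, m ≠ 0 → f (-(((2 * m : ℕ) : ℤ) + 1)) = 0 := by
      intro m hm
      simp only [hf]
      have c1 : -(((2 * m : ℕ) : ℤ) + 1) ≠ -1 := by omega
      have c2 : ¬ ((2 : ℤ) ∣ -(((2 * m : ℕ) : ℤ) + 1)) := by omega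
      rw [mu_zero ν _ c1 c2, zero_mul]
    rw [tsum_eq_single 0 hz]
    simp only [hf]
    have hmu : muStep ν (-(((2 * 0 : ℕ) : ℤ) + 1)) = Nneg ν / 2 := by
      unfold muStep
      have c1 : -(((2 * 0 : ℕ) : ℤ) + 1) = -1 := by omega
      rw [if_pos c1]
    rw [hmu]
    have harg : p + -(((2 * 0 : ℕ) : ℤ) + 1) = p - 1 := by push_cast; ring
    rw [harg]
  have hB2 : (∑' m : ℕ, f (-(((2 * m + 1 : ℕ) : ℤ) + 1)))
      = (1 / 2) * ∑' m : ℕ, (ν (-(m : ℤ) - 1)).toReal * Hup ν (p - 2 * ((m : ℤ) + 1)) := by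
    rw [← tsum_mul_left]
    refine tsum_congr (fun m => ?_)
    simp only [hf]
    have hmu : muStep ν (-(((2 * m + 1 : ℕ) : ℤ) + 1)) = (ν (-(m : ℤ) - 1)).toReal / 2 := by
      unfold muStep
      have c1 : ¬ (-(((2 * m + 1 : ℕ) : ℤ) + 1) = -1) := by omega
      have c2 : ¬ ((0 : ℤ) ≤ -(((2 * m + 1 : ℕ) : ℤ) + 1) ∧ (2 : ℤ) ∣ -(((2 * m + 1 : ℕ) : ℤ) + 1)) := by
        rintro ⟨h, -⟩
        omega
      have c3 : -(((2 * m + 1 : ℕ) : ℤ) + 1) < 0 ∧ (2 : ℤ) ∣ -(((2 * m + 1 : ℕ) : ℤ) + 1) :=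
        ⟨by omega, by omega⟩
      rw [if_neg c1, if_neg c2, if_pos c3]
      have c4 : -(((2 * m + 1 : ℕ) : ℤ) + 1) / 2 = -(m : ℤ) - 1 := by omega
      rw [c4]
    rw [hmu]
    have harg : p + -(((2 * m + 1 : ℕ) : ℤ) + 1) = p - 2 * ((m : ℤ) + 1) := by
      push_cast
      ring
    rw [harg]
    ring
  have hharm' := hharm p hp
  rw [hsplit, ← h0A, ← h0B, hA1, hA2, hB1, hB2] at hharm'
  have hT := Tm_symm ν hN p ℓ hp hl1 hl2
  rw [Tm_top ν p, Tm_zero ν] at hT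
  have g2 : (∑' k : ℕ, (ν (-(k : ℤ) - 1)).toReal * Hup ν (max (p - 2 * ((k : ℤ) + 1)) (p - ℓ)))
      = Tm ν p (p - ℓ) := rfl
  have g3 : (∑' k : ℕ, (ν (-(k : ℤ) - 1)).toReal * Hup ν (max (p - 2 * ((k : ℤ) + 1)) (ℓ - 1)))
      = Tm ν p (ℓ - 1) := rfl
  rw [g2, g3]
  linarith [hT, hharm']
end

section
/- Let ν be a probability mass function on ℤ with ν(−1) > 0 that satisfies Tutte's equation ν(−ℓ−1) = (1/2) · ∑_{k∈ℤ} ν(k) · ν(−ℓ−k−1) for every integer ℓ ≥ 1, and assume ∑_{k=1}^∞ ν(k−1) · ∑_{ℓ=0}^{k−1} ν(−ℓ−1) < ∞. Then (1/ν(−1)) · ∑_{k=1}^∞ ν(k−1) · ∑_{ℓ=0}^{k−1} ν(−ℓ−1) = 1 − ( ∑_{ℓ=1}^∞ ν(−ℓ) )² / ( 2 ν(−1) ). (In the paper the left-hand side equals the probability P(Ĝ_l = 0) that a simple peeling step in the half-planar Boltzmann map with simple boundary swallows no boundary edge on the left.) -/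
open ENNReal Finset


/-- If `ν` is a probability mass function on `ℤ` with `ν(-1) > 0` satisfying Tutte's equation
`ν(-ℓ-1) = ½ ∑_{k∈ℤ} ν(k) ν(-ℓ-k-1)` for all `ℓ ≥ 1`, then
`(1/ν(-1)) ∑_{k≥1} ν(k-1) ∑_{ℓ=0}^{k-1} ν(-ℓ-1) = 1 - (∑_{ℓ≥1} ν(-ℓ))²/(2ν(-1))`.
(The left-hand side is the probability that a simple peeling step in the half-planar
Boltzmann map with simple boundary swallows no boundary edge on the left.) -/
theorem simple_gulp_zero_probability
    (ν : PMF ℤ) (hpos : 0 < ν (-1))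
    (htutte : ∀ ℓ : ℤ, 1 ≤ ℓ →
      (ν (-ℓ - 1)).toReal = (1 / 2) * ∑' k : ℤ, (ν k).toReal * (ν (-ℓ - k - 1)).toReal)
    (hsum : Summable (fun k : ℕ =>
      (ν (k : ℤ)).toReal * ∑ ℓ ∈ Finset.range (k + 1), (ν (-(ℓ : ℤ) - 1)).toReal)) :
    (1 / (ν (-1)).toReal) *
        (∑' k : ℕ, (ν (k : ℤ)).toReal * ∑ ℓ ∈ Finset.range (k + 1), (ν (-(ℓ : ℤ) - 1)).toReal)
      = 1 - (∑' ℓ : ℕ, (ν (-(ℓ : ℤ) - 1)).toReal) ^ 2 / (2 * (ν (-1)).toReal) := by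
  have hle1 : ∀ x : ℤ, ν x ≤ 1 := fun x => ν.coe_le_one x
  have hne : ∀ x : ℤ, ν x ≠ ⊤ := fun x => ((hle1 x).trans_lt ENNReal.one_lt_top).ne
  -- splitting a tsum over ℤ into nonnegative and negative parts
  have hsplit : ∀ h : ℤ → ℝ≥0∞,
      ∑' k : ℤ, h k = (∑' n : ℕ, h n) + ∑' n : ℕ, h (-(n:ℤ) - 1) := by
    intro h
    rw [← tsum_nat_add_neg_add_one ENNReal.summable, ENNReal.tsum_add]
    congr 1
    exact tsum_congr fun n => by rw [show -((n:ℤ) + 1) = -(n:ℤ) - 1 by ring]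
  set A : ℕ → ℝ≥0∞ := fun k => ∑ ℓ ∈ Finset.range (k+1), ν (-(ℓ:ℤ) - 1) with hA
  set C : ℕ → ℝ≥0∞ := fun k => ∑' ℓ : ℕ, ν (-((ℓ:ℤ) + k + 1) - 1) with hC
  set P : ℝ≥0∞ := ∑' n : ℕ, ν (n : ℤ) with hP
  set T : ℝ≥0∞ := ∑' n : ℕ, ν (-(n:ℤ) - 1) with hT
  set S : ℝ≥0∞ := ∑' k : ℕ, ν (k:ℤ) * A k with hS
  set U : ℝ≥0∞ := ∑' ℓ : ℕ, ν (-((ℓ:ℤ)+1) - 1) with hU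
  have hPT : P + T = 1 := by rw [hP, hT, ← hsplit, ν.tsum_coe]
  have hTle : T ≤ 1 := le_add_self.trans hPT.le
  have hPle : P ≤ 1 := le_self_add.trans hPT.le
  have hTne : T ≠ ⊤ := (hTle.trans_lt ENNReal.one_lt_top).ne
  have hPne : P ≠ ⊤ := (hPle.trans_lt ENNReal.one_lt_top).ne
  -- A n + C n = T
  have hAC : ∀ n : ℕ, A n + C n = T := by
    intro n
    rw [hT, ← Summable.sum_add_tsum_nat_add' (f := fun ℓ : ℕ => ν (-(ℓ:ℤ) - 1)) (k := n+1)
      ENNReal.summable]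
    congr 1
  have hCle : ∀ n : ℕ, C n ≤ 1 := fun n => le_trans (le_add_self.trans (hAC n).le) hTle
  have hAle : ∀ n : ℕ, A n ≤ 1 := fun n => le_trans (le_self_add.trans (hAC n).le) hTle
  -- T = ν(-1) + U
  have hTU : T = ν (-1) + U := by
    rw [hT, ← Summable.sum_add_tsum_nat_add' (f := fun ℓ : ℕ => ν (-(ℓ:ℤ) - 1)) (k := 1)
      ENNReal.summable]
    congr 1
    simp
  -- Tutte's equation in ℝ≥0∞
  have htutteE : ∀ ℓ : ℕ, 2 * ν (-((ℓ:ℤ)+1) - 1)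
      = ∑' k : ℤ, ν k * ν (-((ℓ:ℤ)+1) - k - 1) := by
    intro ℓ
    have h1 := htutte ((ℓ:ℤ)+1) (by omega)
    have hle : ∑' k : ℤ, ν k * ν (-((ℓ:ℤ)+1) - k - 1) ≤ 1 := by
      calc ∑' k : ℤ, ν k * ν (-((ℓ:ℤ)+1) - k - 1) ≤ ∑' k : ℤ, ν k * 1 :=
            ENNReal.tsum_le_tsum fun k => mul_le_mul_right (hle1 _) _
        _ = 1 := by simp [ν.tsum_coe]
    have hne2 : (∑' k : ℤ, ν k * ν (-((ℓ:ℤ)+1) - k - 1)) ≠ ⊤ :=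
      (hle.trans_lt ENNReal.one_lt_top).ne
    refine (ENNReal.toReal_eq_toReal_iff' (ENNReal.mul_ne_top (by norm_num) (hne _)) hne2).mp ?_
    rw [ENNReal.toReal_mul, ENNReal.tsum_toReal_eq
      (fun k => ENNReal.mul_ne_top (hne _) (hne _))]
    simp only [ENNReal.toReal_mul, ENNReal.toReal_ofNat]
    rw [h1]
    ring
  -- sum of Tutte over ℓ
  have hD : 2 * U = ∑' ℓ : ℕ, ∑' k : ℤ, ν k * ν (-((ℓ:ℤ)+1) - k - 1) := by
    rw [hU, ← ENNReal.tsum_mul_left]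
    exact tsum_congr htutteE
  -- inner tail sums
  have hinner : ∀ n : ℕ, (∑' ℓ : ℕ, ν ((n:ℤ) - ℓ - 1))
      = (∑ i ∈ Finset.range n, ν (i:ℤ)) + T := by
    intro n
    rw [← Summable.sum_add_tsum_nat_add' (f := fun ℓ : ℕ => ν ((n:ℤ) - ℓ - 1)) (k := n)
      ENNReal.summable]
    congr 1
    · rw [← Finset.sum_range_reflect (fun i => ν (i:ℤ)) n]
      refine Finset.sum_congr rfl fun ℓ hℓ => ?_
      have hℓn : ℓ < n := Finset.mem_range.mp hℓ
      congr 1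
      omega
    · rw [hT]
      exact tsum_congr fun ℓ => by push_cast; ring_nf
  have hD1 : (∑' ℓ : ℕ, ∑' n : ℕ, ν (n:ℤ) * ν (-((ℓ:ℤ)+1) - n - 1))
      = ∑' n : ℕ, ν (n:ℤ) * C n := by
    rw [ENNReal.tsum_comm]
    refine tsum_congr fun n => ?_
    rw [hC, ← ENNReal.tsum_mul_left]
    exact tsum_congr fun ℓ => by push_cast; ring_nf
  -- the cross term
  have hX : (∑' n : ℕ, ν (-(n:ℤ) - 1) * ∑ i ∈ Finset.range n, ν (i:ℤ))
      = ∑' n : ℕ, ν (n:ℤ) * C n := by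
    have step1 : ∀ n : ℕ, ν (-(n:ℤ) - 1) * ∑ i ∈ Finset.range n, ν (i:ℤ)
        = ∑' i : ℕ, (if i < n then ν (-(n:ℤ) - 1) * ν (i:ℤ) else 0) := by
      intro n
      rw [tsum_eq_sum (s := Finset.range n)
        (fun i hi => by simp [Finset.mem_range.not.mp hi]),
        Finset.mul_sum]
      exact Finset.sum_congr rfl fun i hi => by simp [Finset.mem_range.mp hi]
    calc (∑' n : ℕ, ν (-(n:ℤ) - 1) * ∑ i ∈ Finset.range n, ν (i:ℤ))
        = ∑' n : ℕ, ∑' i : ℕ, (if i < n then ν (-(n:ℤ) - 1) * ν (i:ℤ) else 0) :=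
          tsum_congr step1
      _ = ∑' i : ℕ, ∑' n : ℕ, (if i < n then ν (-(n:ℤ) - 1) * ν (i:ℤ) else 0) :=
          ENNReal.tsum_comm
      _ = ∑' i : ℕ, ν (i:ℤ) * C i := by
          refine tsum_congr fun i => ?_
          rw [← Summable.sum_add_tsum_nat_add'
            (f := fun n : ℕ => if i < n then ν (-(n:ℤ) - 1) * ν (i:ℤ) else 0)
            (k := i+1) ENNReal.summable]
          have h0 : ∑ n ∈ Finset.range (i+1),
              (if i < n then ν (-(n:ℤ) - 1) * ν (i:ℤ) else 0) = 0 := by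
            refine Finset.sum_eq_zero fun n hn => ?_
            have := Finset.mem_range.mp hn
            simp [Nat.not_lt.mpr (by omega : n ≤ i)]
          rw [h0, zero_add, hC, ← ENNReal.tsum_mul_left]
          refine tsum_congr fun ℓ => ?_
          have hlt : i < ℓ + (i+1) := by omega
          rw [if_pos hlt]
          have harg : -(((ℓ + (i+1) : ℕ)) : ℤ) - 1 = -((ℓ:ℤ) + i + 1) - 1 := by
            push_cast; ring
          rw [harg, mul_comm]
  have hD2 : (∑' ℓ : ℕ, ∑' n : ℕ, ν (-(n:ℤ) - 1) * ν (-((ℓ:ℤ)+1) - (-(n:ℤ) - 1) - 1))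
      = (∑' n : ℕ, ν (n:ℤ) * C n) + T * T := by
    rw [ENNReal.tsum_comm]
    calc (∑' n : ℕ, ∑' ℓ : ℕ, ν (-(n:ℤ) - 1) * ν (-((ℓ:ℤ)+1) - (-(n:ℤ) - 1) - 1))
        = ∑' n : ℕ, ν (-(n:ℤ) - 1) * ((∑ i ∈ Finset.range n, ν (i:ℤ)) + T) := by
          refine tsum_congr fun n => ?_
          rw [ENNReal.tsum_mul_left, ← hinner n]
          congr 1
          exact tsum_congr fun ℓ => by congr 1; push_cast; ring
      _ = (∑' n : ℕ, ν (-(n:ℤ) - 1) * ∑ i ∈ Finset.range n, ν (i:ℤ))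
          + ∑' n : ℕ, ν (-(n:ℤ) - 1) * T := by
          rw [← ENNReal.tsum_add]
          exact tsum_congr fun n => mul_add _ _ _
      _ = (∑' n : ℕ, ν (n:ℤ) * C n) + T * T := by
          rw [hX, ENNReal.tsum_mul_right, ← hT]
  set E : ℝ≥0∞ := ∑' n : ℕ, ν (n:ℤ) * C n with hE
  have h2U : 2 * U = E + (E + T * T) := by
    rw [hD]
    calc (∑' ℓ : ℕ, ∑' k : ℤ, ν k * ν (-((ℓ:ℤ)+1) - k - 1))
        = ∑' ℓ : ℕ, ((∑' n : ℕ, ν (n:ℤ) * ν (-((ℓ:ℤ)+1) - n - 1))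
            + ∑' n : ℕ, ν (-(n:ℤ) - 1) * ν (-((ℓ:ℤ)+1) - (-(n:ℤ) - 1) - 1)) :=
          tsum_congr fun ℓ => hsplit _
      _ = (∑' ℓ : ℕ, ∑' n : ℕ, ν (n:ℤ) * ν (-((ℓ:ℤ)+1) - n - 1))
          + ∑' ℓ : ℕ, ∑' n : ℕ, ν (-(n:ℤ) - 1) * ν (-((ℓ:ℤ)+1) - (-(n:ℤ) - 1) - 1) :=
          ENNReal.tsum_add
      _ = E + (E + T * T) := by rw [hD1, hD2]
  -- S + E = P * T
  have hSE : S + E = P * T := by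
    rw [hS, hE, ← ENNReal.tsum_add, hP, ← ENNReal.tsum_mul_right]
    exact tsum_congr fun n => by rw [← mul_add, hAC n]
  have hUle : U ≤ T := le_add_self.trans hTU.ge
  have hUne : U ≠ ⊤ := ((hUle.trans hTle).trans_lt ENNReal.one_lt_top).ne
  -- the key identity: 2 S + T * T = 2 ν(-1)
  have hL : (2 * S + T * T) + 2 * U = 2 * T := by
    rw [h2U]
    have h1 : (2 * S + T * T) + (E + (E + T * T)) = 2 * (S + E) + 2 * (T * T) := by ring
    rw [h1, hSE]
    calc 2 * (P * T) + 2 * (T * T) = 2 * ((P + T) * T) := by ring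
      _ = 2 * T := by rw [hPT, one_mul]
  have hR : (2 * ν (-1)) + 2 * U = 2 * T := by rw [← mul_add, ← hTU]
  have hkey : 2 * S + T * T = 2 * ν (-1) := by
    have h2Une : 2 * U ≠ ⊤ := ENNReal.mul_ne_top (by finiteness) hUne
    have := hL.trans hR.symm
    rwa [add_comm (2 * S + T * T), add_comm (2 * ν (-1)),
      ENNReal.add_right_inj h2Une] at this
  -- pass to real numbers
  have hSle : S ≤ 1 := by
    calc S ≤ ∑' n : ℕ, ν (n:ℤ) * 1 := ENNReal.tsum_le_tsum fun n =>
          mul_le_mul_right (hAle n) _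
      _ = P := by simp [hP]
      _ ≤ 1 := hPle
  have hSne : S ≠ ⊤ := (hSle.trans_lt ENNReal.one_lt_top).ne
  have hAne : ∀ k : ℕ, A k ≠ ⊤ := fun k => ((hAle k).trans_lt ENNReal.one_lt_top).ne
  have hkeyR : 2 * S.toReal + T.toReal * T.toReal = 2 * (ν (-1)).toReal := by
    have := congrArg ENNReal.toReal hkey
    rwa [ENNReal.toReal_add (ENNReal.mul_ne_top (by finiteness) hSne)
        (ENNReal.mul_ne_top hTne hTne),
      ENNReal.toReal_mul, ENNReal.toReal_mul, ENNReal.toReal_mul,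
      ENNReal.toReal_ofNat] at this
  have hSr : S.toReal = ∑' k : ℕ, (ν (k:ℤ)).toReal
      * ∑ ℓ ∈ Finset.range (k + 1), (ν (-(ℓ:ℤ) - 1)).toReal := by
    rw [hS, ENNReal.tsum_toReal_eq (fun k => ENNReal.mul_ne_top (hne _) (hAne k))]
    refine tsum_congr fun k => ?_
    rw [ENNReal.toReal_mul, hA, ENNReal.toReal_sum (fun _ _ => hne _)]
  have hTr : T.toReal = ∑' ℓ : ℕ, (ν (-(ℓ:ℤ) - 1)).toReal := by
    rw [hT, ENNReal.tsum_toReal_eq (fun _ => hne _)]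
  rw [← hSr, ← hTr]
  have ha : 0 < (ν (-1)).toReal := ENNReal.toReal_pos hpos.ne' (hne _)
  field_simp
  nlinarith [hkeyR]
end

section
/- Let μ be a probability mass function on ℤ and let (R_n)_{n≥0} be a random walk started from an integer k ≥ 1 with i.i.d. increments of law μ, and suppose limsup_n R_n = +∞ almost surely. Let h : ℤ → [0,∞) be bounded, with h(x) = 0 for all x < 0, h(x) → 0 as x → +∞, and h μ-harmonic on the positive integers, i.e. h(x) = ∑_{y∈ℤ} μ(y) h(x+y) for every x ≥ 1. Let τ = inf{ n ≥ 0 : R_n ≤ 0 }. Then h(k) = h(0) · P( τ < ∞ and R_τ = 0 ). -/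
open MeasureTheory ProbabilityTheory Filter
open scoped ENNReal

lemma pmf_integral_eq_tsum (μ : PMF ℤ) (f : ℤ → ℝ) (C : ℝ) (hf : ∀ z, |f z| ≤ C) :
    ∫ y, f y ∂μ.toMeasure = ∑' y, (μ y).toReal * f y := by
  have hint : Integrable f μ.toMeasure := by
    refine (integrable_const C).mono' (measurable_of_countable f).aestronglyMeasurable ?_
    filter_upwards with y using (by simpa [Real.norm_eq_abs] using hf y)
  rw [integral_countable' hint]
  exact tsum_congr fun y => by
    rw [measureReal_def, μ.toMeasure_apply_singleton y (measurableSet_singleton y), smul_eq_mul]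

lemma key_step {Ω : Type*} [MeasurableSpace Ω] (P : Measure Ω) [IsProbabilityMeasure P]
    (μ : PMF ℤ) (X : ℕ → Ω → ℤ) (hX : ∀ i, Measurable (X i))
    (hiid : iIndepFun X P)
    (hlaw : ∀ i, Measure.map (X i) P = μ.toMeasure)
    (n : ℕ) (F : (Fin n → ℤ) → ℤ → ℝ) (C : ℝ) (hF : ∀ t z, |F t z| ≤ C) :
    ∫ ω, F (fun j => X j.1 ω) (X n ω) ∂P
      = ∫ ω, ∫ y, F (fun j => X j.1 ω) y ∂μ.toMeasure ∂P := by
  set T : Ω → (Fin n → ℤ) := fun ω j => X j.1 ω with hT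
  have hTm : Measurable T := measurable_pi_lambda _ fun j => hX j.1
  have hindep : IndepFun T (X n) P := by
    have h1 := hiid.indepFun_finset (Finset.range n) {n} (by simp) hX
    have h2 := h1.comp (φ := fun g (j : Fin n) => g ⟨j.1, Finset.mem_range.mpr j.2⟩)
      (ψ := fun g => g ⟨n, Finset.mem_singleton_self n⟩)
      (measurable_pi_lambda _ fun j => measurable_pi_apply _) (measurable_pi_apply (X := fun _ : ({n} : Finset ℕ) => ℤ)
        (⟨n, Finset.mem_singleton_self n⟩ : ({n} : Finset ℕ)))
    exact h2
  have hmap : P.map (fun ω => (T ω, X n ω)) = (P.map T).prod μ.toMeasure := by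
    rw [← hlaw n]
    exact (indepFun_iff_map_prod_eq_prod_map_map hTm.aemeasurable (hX n).aemeasurable).mp hindep
  have hpair : Measurable fun ω => (T ω, X n ω) := hTm.prodMk (hX n)
  have hFm : Measurable (Function.uncurry F) := measurable_of_countable _
  have hPT : IsProbabilityMeasure (P.map T) := Measure.isProbabilityMeasure_map hTm.aemeasurable
  have hFint : Integrable (Function.uncurry F) ((P.map T).prod μ.toMeasure) := by
    refine (integrable_const C).mono' hFm.aestronglyMeasurable ?_
    filter_upwards with p using by
      simpa [Real.norm_eq_abs, Function.uncurry] using hF p.1 p.2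
  calc ∫ ω, F (T ω) (X n ω) ∂P
      = ∫ p, Function.uncurry F p ∂(P.map (fun ω => (T ω, X n ω))) := by
        rw [integral_map hpair.aemeasurable hFm.aestronglyMeasurable]
        rfl
    _ = ∫ p, Function.uncurry F p ∂((P.map T).prod μ.toMeasure) := by rw [hmap]
    _ = ∫ t, ∫ y, F t y ∂μ.toMeasure ∂(P.map T) := integral_prod _ hFint
    _ = ∫ ω, ∫ y, F (T ω) y ∂μ.toMeasure ∂P :=
        integral_map hTm.aemeasurable (measurable_of_countable _).aestronglyMeasurable

/-- **Optional stopping characterization of `H^↓`.** Let `(R_n)` be a `μ`-random walk started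
at `k ≥ 1` with `limsup R_n = +∞` a.s., and let `h : ℤ → [0,∞)` be bounded, vanishing on the
negative integers, tending to `0` at `+∞`, and `μ`-harmonic on the positive integers. Then
`h(k) = h(0) · P(τ < ∞ and R_τ = 0)` where `τ = inf{n ≥ 0 : R_n ≤ 0}` (the event being
expressed as the existence of `n` with `R_n = 0` and `R_i ≥ 1` for all `i < n`). -/
theorem optional_stopping_hitting_zero
    (Ω : Type*) [MeasurableSpace Ω] (P : Measure Ω) [IsProbabilityMeasure P]
    (μ : PMF ℤ) (X : ℕ → Ω → ℤ)
    (hX : ∀ i, Measurable (X i))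
    (hiid : iIndepFun X P)
    (hlaw : ∀ i, Measure.map (X i) P = μ.toMeasure)
    (k : ℤ) (hk : 1 ≤ k)
    (hlimsup : ∀ᵐ ω ∂P, ∀ M : ℤ, ∃ n : ℕ, M ≤ k + ∑ i ∈ Finset.range n, X i ω)
    (h : ℤ → ℝ) (hnonneg : ∀ x, 0 ≤ h x) (hbdd : ∃ M : ℝ, ∀ x, h x ≤ M)
    (hzero : ∀ x : ℤ, x < 0 → h x = 0)
    (hvanish : Tendsto h atTop (nhds 0))
    (hharm : ∀ x : ℤ, 1 ≤ x → h x = ∑' y : ℤ, (μ y).toReal * h (x + y)) :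
    h k = h 0 *
      (P {ω | ∃ n : ℕ, k + ∑ i ∈ Finset.range n, X i ω = 0 ∧
              ∀ j < n, 1 ≤ k + ∑ i ∈ Finset.range j, X i ω}).toReal := by
  classical
  obtain ⟨C0, hC0⟩ := hbdd
  set C := max C0 0 with hCdef
  have hhC : ∀ x, h x ≤ C := fun x => (hC0 x).trans (le_max_left _ _)
  have hCpos : 0 ≤ C := le_max_right _ _
  set R : ℕ → Ω → ℤ := fun n ω => k + ∑ i ∈ Finset.range n, X i ω with hRdef
  have hRm : ∀ n, Measurable (R n) :=
    fun n => (Finset.measurable_sum _ fun i _ => hX i).const_add k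
  have hInt : ∀ n : ℕ, Integrable (fun ω => h (R n ω)) P := by
    intro n
    refine (integrable_const C).mono'
      ((measurable_of_countable h).comp (hRm n)).aestronglyMeasurable ?_
    filter_upwards with ω
    rw [Real.norm_eq_abs, abs_of_nonneg (hnonneg _)]; exact hhC _
  set Tar : Set Ω := {ω | ∃ n : ℕ, R n ω = 0 ∧ ∀ j < n, 1 ≤ R j ω} with hTardef
  set B : ℤ → ℕ → Set Ω := fun M n => {ω | ∀ j < n, 1 ≤ R j ω ∧ R j ω < M} with hBdef
  have hBmeas : ∀ M n, MeasurableSet (B M n) := by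
    intro M n
    have hEq : B M n = ⋂ j ∈ Finset.range n, (R j) ⁻¹' {x | 1 ≤ x ∧ x < M} := by
      ext ω; simp [hBdef]
    rw [hEq]
    exact MeasurableSet.biInter (Finset.range n).countable_toSet
      fun j _ => (hRm j) .of_discrete
  set E : ℤ → ℕ → Set Ω := fun M n => B M n ∩ {ω | R n ω = 0} with hEdef
  have hEmeas : ∀ M n, MeasurableSet (E M n) := by
    intro M n
    have : {ω | R n ω = 0} = (R n) ⁻¹' {x | x = 0} := rfl
    exact (hBmeas M n).inter (this ▸ (hRm n) .of_discrete)
  set G : ℤ → ℕ → Set Ω := fun M n => B M n ∩ {ω | M ≤ R n ω} with hGdef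
  have hGmeas : ∀ M n, MeasurableSet (G M n) := by
    intro M n
    have : {ω | M ≤ R n ω} = (R n) ⁻¹' {x | M ≤ x} := rfl
    exact (hBmeas M n).inter (this ▸ (hRm n) .of_discrete)
  set b : ℤ → ℕ → ℝ := fun M n => ∫ ω in B M n, h (R n ω) ∂P with hbdef
  set g : ℤ → ℕ → ℝ := fun M n => ∫ ω in G M n, h (R n ω) ∂P with hgdef
  have hBsucc : ∀ (M : ℤ) (n : ℕ) (ω : Ω),
      ω ∈ B M (n+1) ↔ ω ∈ B M n ∧ (1 ≤ R n ω ∧ R n ω < M) := by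
    intro M n ω
    constructor
    · intro H
      exact ⟨fun j hj => H j (hj.trans (Nat.lt_succ_self n)), H n (Nat.lt_succ_self n)⟩
    · rintro ⟨H1, H2⟩ j hj
      rcases Nat.lt_succ_iff_lt_or_eq.mp hj with hj' | hj'
      · exact H1 j hj'
      · subst hj'; exact H2
  -- Part 1 : martingale step
  have part1 : ∀ (M : ℤ) (n : ℕ),
      ∫ ω in B M (n+1), h (R (n+1) ω) ∂P = ∫ ω in B M (n+1), h (R n ω) ∂P := by
    intro M n
    set r : ℕ → (Fin n → ℤ) → ℤ :=
      fun j t => k + ∑ i ∈ Finset.range j, (if hi : i < n then t ⟨i, hi⟩ else 0) with hrdef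
    set F : (Fin n → ℤ) → ℤ → ℝ :=
      fun t z => if ∀ j < n + 1, 1 ≤ r j t ∧ r j t < M then h (r n t + z) else 0 with hFdef
    have hFbd : ∀ t z, |F t z| ≤ C := by
      intro t z; rw [hFdef]; dsimp only
      split
      · rw [abs_of_nonneg (hnonneg _)]; exact hhC _
      · simpa using hCpos
    have hrT : ∀ (ω : Ω) (j : ℕ), j ≤ n → r j (fun i : Fin n => X i.1 ω) = R j ω := by
      intro ω j hj
      rw [hrdef, hRdef]; dsimp only
      congr 1
      refine Finset.sum_congr rfl fun i hi => ?_
      rw [dif_pos (lt_of_lt_of_le (Finset.mem_range.mp hi) hj)]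
    have hcond : ∀ ω : Ω, (∀ j < n + 1, 1 ≤ r j (fun i : Fin n => X i.1 ω) ∧
        r j (fun i : Fin n => X i.1 ω) < M) ↔ ω ∈ B M (n+1) := by
      intro ω
      constructor
      · intro H j hj; rw [← hrT ω j (Nat.lt_succ_iff.mp hj)]; exact H j hj
      · intro H j hj; rw [hrT ω j (Nat.lt_succ_iff.mp hj)]; exact H j hj
    have hRsucc : ∀ ω, R (n+1) ω = R n ω + X n ω := by
      intro ω; rw [hRdef]; dsimp only; rw [Finset.sum_range_succ, add_assoc]
    have hFT : ∀ ω, F (fun i : Fin n => X i.1 ω) (X n ω)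
        = (B M (n+1)).indicator (fun ω => h (R (n+1) ω)) ω := by
      intro ω
      rw [hFdef, Set.indicator_apply]; dsimp only
      by_cases hB : ω ∈ B M (n+1)
      · rw [if_pos ((hcond ω).mpr hB), if_pos hB, hrT ω n le_rfl, hRsucc]
      · rw [if_neg (fun H => hB ((hcond ω).mp H)), if_neg hB]
    have hGT : ∀ ω, (∫ y, F (fun i : Fin n => X i.1 ω) y ∂μ.toMeasure)
        = (B M (n+1)).indicator (fun ω => h (R n ω)) ω := by
      intro ω
      by_cases hB : ω ∈ B M (n+1)
      · rw [Set.indicator_of_mem hB]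
        have h1 : ∀ y, F (fun i : Fin n => X i.1 ω) y = h (R n ω + y) := by
          intro y; rw [hFdef]; dsimp only
          rw [if_pos ((hcond ω).mpr hB), hrT ω n le_rfl]
        calc (∫ y, F (fun i : Fin n => X i.1 ω) y ∂μ.toMeasure)
            = ∫ y, h (R n ω + y) ∂μ.toMeasure := by simp_rw [h1]
          _ = ∑' y, (μ y).toReal * h (R n ω + y) :=
              pmf_integral_eq_tsum μ _ C (fun z => by
                rw [abs_of_nonneg (hnonneg _)]; exact hhC _)
          _ = h (R n ω) := (hharm _ (hB n (Nat.lt_succ_self n)).1).symm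
      · rw [Set.indicator_of_notMem hB]
        have h1 : ∀ y, F (fun i : Fin n => X i.1 ω) y = 0 := by
          intro y; rw [hFdef]; dsimp only
          rw [if_neg (fun H => hB ((hcond ω).mp H))]
        simp_rw [h1]; exact integral_zero _ _
    calc ∫ ω in B M (n+1), h (R (n+1) ω) ∂P
        = ∫ ω, (B M (n+1)).indicator (fun ω => h (R (n+1) ω)) ω ∂P :=
          (integral_indicator (hBmeas M (n+1))).symm
      _ = ∫ ω, F (fun i : Fin n => X i.1 ω) (X n ω) ∂P := by simp_rw [hFT]
      _ = ∫ ω, ∫ y, F (fun i : Fin n => X i.1 ω) y ∂μ.toMeasure ∂P :=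
          key_step P μ X hX hiid hlaw n F C hFbd
      _ = ∫ ω, (B M (n+1)).indicator (fun ω => h (R n ω)) ω ∂P := by simp_rw [hGT]
      _ = ∫ ω in B M (n+1), h (R n ω) ∂P := integral_indicator (hBmeas M (n+1))
  -- Part 2 : one-step decomposition
  have part2 : ∀ (M : ℤ), 1 ≤ M → ∀ n : ℕ,
      b M n = b M (n+1) + h 0 * (P (E M n)).toReal + g M n := by
    intro M hM n
    have hmemE : ∀ ω, ω ∈ E M n ↔ ω ∈ B M n ∧ R n ω = 0 := fun ω => Iff.rfl
    have hmemG : ∀ ω, ω ∈ G M n ↔ ω ∈ B M n ∧ M ≤ R n ω := fun ω => Iff.rfl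
    have hsplit : ∀ ω, (B M n).indicator (fun ω => h (R n ω)) ω
        = (B M (n+1)).indicator (fun ω => h (R n ω)) ω
          + (E M n).indicator (fun ω => h (R n ω)) ω
          + (G M n).indicator (fun ω => h (R n ω)) ω := by
      intro ω
      by_cases hB : ω ∈ B M n
      · rcases lt_trichotomy (R n ω) 0 with hR0 | hR0 | hR0
        · rw [Set.indicator_of_mem hB, Set.indicator_of_notMem
            (fun H => by have := ((hBsucc M n ω).mp H).2; omega),
            Set.indicator_of_notMem (fun H => by have := ((hmemE ω).mp H).2; omega),
            Set.indicator_of_notMem (fun H => by have := ((hmemG ω).mp H).2; omega)]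
          rw [hzero _ hR0]; ring
        · rw [Set.indicator_of_mem hB, Set.indicator_of_notMem
            (fun H => by have := ((hBsucc M n ω).mp H).2; omega),
            Set.indicator_of_mem ((hmemE ω).mpr ⟨hB, hR0⟩),
            Set.indicator_of_notMem (fun H => by have := ((hmemG ω).mp H).2; omega)]
          ring
        · by_cases hRM : R n ω < M
          · rw [Set.indicator_of_mem hB,
              Set.indicator_of_mem ((hBsucc M n ω).mpr ⟨hB, by omega, hRM⟩),
              Set.indicator_of_notMem (fun H => by have := ((hmemE ω).mp H).2; omega),
              Set.indicator_of_notMem (fun H => by have := ((hmemG ω).mp H).2; omega)]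
            ring
          · rw [Set.indicator_of_mem hB, Set.indicator_of_notMem
              (fun H => by have := ((hBsucc M n ω).mp H).2; omega),
              Set.indicator_of_notMem (fun H => by have := ((hmemE ω).mp H).2; omega),
              Set.indicator_of_mem ((hmemG ω).mpr ⟨hB, by omega⟩)]
            ring
      · rw [Set.indicator_of_notMem hB,
          Set.indicator_of_notMem (fun H => hB ((hBsucc M n ω).mp H).1),
          Set.indicator_of_notMem (fun H => hB ((hmemE ω).mp H).1),
          Set.indicator_of_notMem (fun H => hB ((hmemG ω).mp H).1)]
        ring
    have hIB : Integrable ((B M (n+1)).indicator (fun ω => h (R n ω))) P :=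
      (hInt n).indicator (hBmeas M (n+1))
    have hIE : Integrable ((E M n).indicator (fun ω => h (R n ω))) P :=
      (hInt n).indicator (hEmeas M n)
    have hIG : Integrable ((G M n).indicator (fun ω => h (R n ω))) P :=
      (hInt n).indicator (hGmeas M n)
    have hEint : ∫ ω in E M n, h (R n ω) ∂P = h 0 * (P (E M n)).toReal := by
      rw [setIntegral_congr_fun (hEmeas M n) (fun ω hω => by rw [hω.2] : Set.EqOn _ (fun _ => h 0) _)]
      rw [setIntegral_const, smul_eq_mul, mul_comm, measureReal_def]
    calc b M n = ∫ ω, (B M n).indicator (fun ω => h (R n ω)) ω ∂P :=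
          (integral_indicator (hBmeas M n)).symm
      _ = ∫ ω, ((B M (n+1)).indicator (fun ω => h (R n ω)) ω
            + (E M n).indicator (fun ω => h (R n ω)) ω
            + (G M n).indicator (fun ω => h (R n ω)) ω) ∂P := by simp_rw [hsplit]
      _ = (∫ ω, (B M (n+1)).indicator (fun ω => h (R n ω)) ω ∂P)
            + (∫ ω, (E M n).indicator (fun ω => h (R n ω)) ω ∂P)
            + (∫ ω, (G M n).indicator (fun ω => h (R n ω)) ω ∂P) := by
          have hIBE : Integrable (fun ω => (B M (n+1)).indicator (fun ω => h (R n ω)) ω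
              + (E M n).indicator (fun ω => h (R n ω)) ω) P := hIB.add hIE
          rw [integral_add hIBE hIG, integral_add hIB hIE]
      _ = b M (n+1) + h 0 * (P (E M n)).toReal + g M n := by
          rw [integral_indicator (hBmeas M (n+1)), integral_indicator (hEmeas M n),
            integral_indicator (hGmeas M n), ← part1 M n, ← hEint]
  -- telescoping
  have hb0 : ∀ M : ℤ, b M 0 = h k := by
    intro M
    have hBu : B M 0 = Set.univ := by ext ω; simp [hBdef]
    have hRk : ∀ ω : Ω, h (R 0 ω) = h k := by intro ω; simp [hRdef]
    rw [hbdef]; dsimp only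
    rw [hBu, setIntegral_univ]
    simp_rw [hRk]
    simp
  have htel : ∀ (M : ℤ), 1 ≤ M → ∀ N : ℕ, h k
      = b M N + ∑ n ∈ Finset.range N, (h 0 * (P (E M n)).toReal + g M n) := by
    intro M hM N
    induction N with
    | zero => simp [hb0 M]
    | succ N ih =>
      rw [Finset.sum_range_succ, ih, part2 M hM N]
      ring
  have hbnn : ∀ M N, 0 ≤ b M N :=
    fun M N => setIntegral_nonneg (hBmeas M N) fun ω _ => hnonneg _
  have hgnn : ∀ M N, 0 ≤ g M N :=
    fun M N => setIntegral_nonneg (hGmeas M N) fun ω _ => hnonneg _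
  -- disjointness of the E-sets and G-sets
  have hEdisj : ∀ M : ℤ, ∀ n n' : ℕ, n ≠ n' → Disjoint (E M n) (E M n') := by
    have key : ∀ (M : ℤ) (n n' : ℕ), n < n' → Disjoint (E M n) (E M n') := by
      intro M n n' hnn'
      rw [Set.disjoint_left]
      rintro ω ⟨hB, hR⟩ ⟨hB', _⟩
      have h1 := hB' n hnn'
      have h2 : R n ω = 0 := hR
      omega
    intro M n n' hne
    rcases lt_or_gt_of_ne hne with hlt | hgt
    · exact key M n n' hlt
    · exact (key M n' n hgt).symm
  have hGdisj : ∀ M : ℤ, ∀ n n' : ℕ, n ≠ n' → Disjoint (G M n) (G M n') := by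
    have key : ∀ (M : ℤ) (n n' : ℕ), n < n' → Disjoint (G M n) (G M n') := by
      intro M n n' hnn'
      rw [Set.disjoint_left]
      rintro ω ⟨hB, hR⟩ ⟨hB', _⟩
      have h1 := hB' n hnn'
      have h2 : M ≤ R n ω := hR
      omega
    intro M n n' hne
    rcases lt_or_gt_of_ne hne with hlt | hgt
    · exact key M n n' hlt
    · exact (key M n' n hgt).symm
  have hsumE : ∀ (M : ℤ) (N : ℕ), ∑ n ∈ Finset.range N, (P (E M n)).toReal
      = (P (⋃ n ∈ Finset.range N, E M n)).toReal := by
    intro M N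
    rw [measure_biUnion_finset (fun n _ n' _ hne => hEdisj M n n' hne)
      (fun n _ => hEmeas M n)]
    exact (ENNReal.toReal_sum (fun n _ => measure_ne_top P _)).symm
  have hsumG : ∀ (M : ℤ) (N : ℕ), ∑ n ∈ Finset.range N, (P (G M n)).toReal ≤ 1 := by
    intro M N
    rw [← ENNReal.toReal_sum (fun n _ => measure_ne_top P _),
      ← measure_biUnion_finset (fun n _ n' _ hne => hGdisj M n n' hne)
      (fun n _ => hGmeas M n)]
    have h1 : P (⋃ n ∈ Finset.range N, G M n) ≤ 1 := prob_le_one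
    calc (P (⋃ n ∈ Finset.range N, G M n)).toReal ≤ (1 : ℝ≥0∞).toReal :=
          ENNReal.toReal_mono (by simp) h1
      _ = 1 := by simp
  -- lower bound
  have hEsubTar : ∀ (M : ℤ) (n : ℕ), E M n ⊆ Tar := by
    rintro M n ω ⟨hB, hR⟩
    exact ⟨n, hR, fun j hj => (hB j hj).1⟩
  set Fm : ℕ → Set Ω := fun m => ⋃ n ∈ Finset.range m, E (m : ℤ) n with hFmdef
  have hBmono : ∀ (M M' : ℤ), M ≤ M' → ∀ n, B M n ⊆ B M' n := by
    intro M M' hMM' n ω hω j hj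
    have := hω j hj
    omega
  have hFmono : Monotone Fm := by
    intro m m' hmm'
    rw [hFmdef]
    intro ω hω
    simp only [Set.mem_iUnion, Finset.mem_range] at hω ⊢
    obtain ⟨n, hn, hmem⟩ := hω
    refine ⟨n, lt_of_lt_of_le hn hmm', ?_⟩
    exact ⟨hBmono (m : ℤ) (m' : ℤ) (by exact_mod_cast hmm') n hmem.1, hmem.2⟩
  have hFunion : ⋃ m, Fm m = Tar := by
    apply Set.Subset.antisymm
    · intro ω hω
      simp only [Set.mem_iUnion] at hω
      obtain ⟨m, hm⟩ := hω
      simp only [hFmdef, Set.mem_iUnion, Finset.mem_range] at hm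
      obtain ⟨n, _, hmem⟩ := hm
      exact hEsubTar _ n hmem
    · rintro ω ⟨n, hR, hpos⟩
      set m : ℕ := n + 1 + (Finset.range n).sup (fun j => (R j ω).toNat) with hmdef
      refine Set.mem_iUnion.mpr ⟨m, ?_⟩
      simp only [hFmdef, Set.mem_iUnion, Finset.mem_range]
      refine ⟨n, by omega, ⟨?_, hR⟩⟩
      intro j hj
      refine ⟨hpos j hj, ?_⟩
      have h1 : (R j ω).toNat ≤ (Finset.range n).sup (fun j => (R j ω).toNat) :=
        Finset.le_sup (f := fun j => (R j ω).toNat) (Finset.mem_range.mpr hj)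
      have h2 : R j ω ≤ ((R j ω).toNat : ℤ) := Int.self_le_toNat _
      have h3 : (R j ω).toNat < m := by omega
      omega
  have hlow : ∀ m : ℕ, 1 ≤ m → h 0 * (P (Fm m)).toReal ≤ h k := by
    intro m hm
    have hM : (1 : ℤ) ≤ (m : ℤ) := by exact_mod_cast hm
    have htel' := htel (m : ℤ) hM m
    have h1 : h 0 * (P (Fm m)).toReal = ∑ n ∈ Finset.range m, h 0 * (P (E (m : ℤ) n)).toReal := by
      rw [hFmdef]; dsimp only
      rw [← hsumE (m : ℤ) m, Finset.mul_sum]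
    have h2 : ∑ n ∈ Finset.range m, h 0 * (P (E (m : ℤ) n)).toReal
        ≤ ∑ n ∈ Finset.range m, (h 0 * (P (E (m : ℤ) n)).toReal + g (m : ℤ) n) :=
      Finset.sum_le_sum fun n _ => by have := hgnn (m : ℤ) n; linarith
    have h3 := hbnn (m : ℤ) m
    rw [h1]
    linarith
  have htends : Tendsto (fun m => h 0 * (P (Fm m)).toReal) atTop (nhds (h 0 * (P Tar).toReal)) := by
    have h1 := tendsto_measure_iUnion_atTop (μ := P) hFmono
    rw [hFunion] at h1
    have h2 := (ENNReal.tendsto_toReal (measure_ne_top P Tar)).comp h1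
    exact h2.const_mul _
  have hlower : h 0 * (P Tar).toReal ≤ h k :=
    le_of_tendsto htends (eventually_atTop.mpr ⟨1, fun m hm => hlow m hm⟩)
  -- upper bound
  have hupper : ∀ ε : ℝ, 0 < ε → h k ≤ h 0 * (P Tar).toReal + ε := by
    intro ε hε
    have hev : ∀ᶠ x in atTop, h x < ε / 2 := hvanish.eventually (gt_mem_nhds (by linarith))
    obtain ⟨M₁, hM₁⟩ := eventually_atTop.mp hev
    set M : ℤ := max M₁ 1 with hMdef
    have hM : (1 : ℤ) ≤ M := le_max_right _ _
    -- sum of g is small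
    have hgsmall : ∀ N : ℕ, ∑ n ∈ Finset.range N, g M n ≤ ε / 2 := by
      intro N
      have h1 : ∀ n : ℕ, g M n ≤ (ε / 2) * (P (G M n)).toReal := by
        intro n
        have hle : ∫ ω in G M n, h (R n ω) ∂P ≤ ∫ _ω in G M n, (ε / 2) ∂P := by
          refine setIntegral_mono_on (hInt n).integrableOn ((integrableOn_const_iff (by simp)).mpr ?_)
            (hGmeas M n) ?_
          · right; exact measure_lt_top P _
          · rintro ω ⟨_, hMR⟩
            exact le_of_lt (hM₁ (R n ω) (le_trans (le_max_left _ _) hMR))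
        rw [setIntegral_const, smul_eq_mul, mul_comm] at hle
        exact hle
      calc ∑ n ∈ Finset.range N, g M n
          ≤ ∑ n ∈ Finset.range N, (ε / 2) * (P (G M n)).toReal :=
            Finset.sum_le_sum fun n _ => h1 n
        _ = (ε / 2) * ∑ n ∈ Finset.range N, (P (G M n)).toReal := by rw [Finset.mul_sum]
        _ ≤ (ε / 2) * 1 := by
            have := hsumG M N
            nlinarith
        _ = ε / 2 := by ring
    -- b M N gets small
    have hBnull : P (⋂ N, B M N) = 0 := by
      have hsub : (⋂ N, B M N) ⊆ {ω | ¬ ∀ M' : ℤ, ∃ n : ℕ, M' ≤ R n ω} := by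
        intro ω hω
        simp only [Set.mem_iInter] at hω
        intro H
        obtain ⟨n, hn⟩ := H M
        have := hω (n + 1) n (Nat.lt_succ_self n)
        omega
      refine measure_mono_null hsub ?_
      have := hlimsup
      rw [ae_iff] at this
      exact this
    have hBanti : Antitone (fun N => B M N) := by
      intro N N' hNN' ω hω j hj
      exact hω j (lt_of_lt_of_le hj hNN')
    have hBtend : Tendsto (fun N => C * (P (B M N)).toReal) atTop (nhds 0) := by
      have h1 := tendsto_measure_iInter_atTop (μ := P)
        (fun N => (hBmeas M N).nullMeasurableSet) hBanti ⟨0, measure_ne_top P _⟩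
      rw [hBnull] at h1
      have h2 := (ENNReal.tendsto_toReal (by simp : (0 : ℝ≥0∞) ≠ ⊤)).comp h1
      simp only [ENNReal.toReal_zero] at h2
      have h3 := h2.const_mul C
      simpa using h3
    have hbev : ∀ᶠ N in atTop, C * (P (B M N)).toReal < ε / 2 :=
      hBtend.eventually (gt_mem_nhds (by linarith))
    obtain ⟨N, hN⟩ := eventually_atTop.mp hbev
    have hbN : b M N ≤ C * (P (B M N)).toReal := by
      have hle : ∫ ω in B M N, h (R N ω) ∂P ≤ ∫ _ω in B M N, C ∂P := by
        refine setIntegral_mono_on (hInt N).integrableOn ((integrableOn_const_iff (by simp)).mpr ?_)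
          (hBmeas M N) ?_
        · right; exact measure_lt_top P _
        · intro ω _; exact hhC _
      rw [setIntegral_const, smul_eq_mul, mul_comm] at hle
      exact hle
    have hEP : h 0 * ∑ n ∈ Finset.range N, (P (E M n)).toReal ≤ h 0 * (P Tar).toReal := by
      rw [hsumE M N]
      refine mul_le_mul_of_nonneg_left ?_ (hnonneg 0)
      refine ENNReal.toReal_mono (measure_ne_top P _) (measure_mono ?_)
      intro ω hω
      simp only [Set.mem_iUnion, Finset.mem_range] at hω
      obtain ⟨n, _, hmem⟩ := hω
      exact hEsubTar M n hmem
    have htel' := htel M hM N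
    rw [Finset.sum_add_distrib, ← Finset.mul_sum] at htel'
    have := hgsmall N
    have := hN N le_rfl
    linarith
  -- conclusion
  refine le_antisymm (_root_.le_of_forall_pos_le_add fun ε hε => hupper ε hε) hlower
end
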